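/- arXiv:1003.4355 — 9 statements merged into one kernel-verified Lean document; each statement's English description precedes it below -/
import Mathlib

section
/- Let λ1, λ2 > 0 and 0 ≤ ρ < 1. The joint density f integrates to one: ∫_0^∞ ∫_0^∞ f(α,β) dα dβ = 1, where f(α,β) = Σ_{k=0}^∞ c_k (1/(λ1 λ2)) exp(-(α/λ1 + β/λ2)/(1-ρ)) (α/λ1)^k (β/λ2)^k and c_k = ρ^k / ((k!)^2 (1-ρ)^{2k+1}). -/
open MeasureTheory Real Set


lemma pow_exp_integral (k : ℕ) {r : ℝ} (hr : 0 < r) :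
    ∫ t in Ioi (0:ℝ), t ^ k * Real.exp (-(r * t)) = (k.factorial : ℝ) / r ^ (k + 1) := by
  have h := Real.integral_rpow_mul_exp_neg_mul_Ioi (a := (k:ℝ) + 1) (r := r) (by positivity) hr
  rw [show ((k:ℝ)+1) - 1 = (k:ℝ) by ring,
    show ((k:ℝ)+1) = ((k+1:ℕ):ℝ) by push_cast; ring, Real.rpow_natCast] at h
  rw [setIntegral_congr_fun measurableSet_Ioi
      (fun t (ht : 0 < t) => by rw [← Real.rpow_natCast t k]), h]
  rw [show ((k+1:ℕ):ℝ) = (k:ℝ)+1 by push_cast; ring, Real.Gamma_nat_eq_factorial]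
  field_simp
  rw [← mul_pow, one_div, inv_mul_cancel₀ hr.ne', one_pow]

lemma pow_exp_integrable (k : ℕ) {r : ℝ} (hr : 0 < r) :
    IntegrableOn (fun t => t ^ k * Real.exp (-(r * t))) (Ioi (0:ℝ)) := by
  by_contra h
  have h0 : ∫ t in Ioi (0:ℝ), t ^ k * Real.exp (-(r * t)) = 0 := integral_undef h
  rw [pow_exp_integral k hr] at h0
  have : (0:ℝ) < (k.factorial : ℝ) / r ^ (k + 1) := by positivity
  linarith

lemma scaled_eq (k : ℕ) {L u : ℝ} (hL : L ≠ 0) (hu : u ≠ 0) (t : ℝ) :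
    Real.exp (-(t/L)/u) * (t/L)^k = (1/L)^k * (t^k * Real.exp (-((1/(L*u)) * t))) := by
  rw [show -(t/L)/u = -((1/(L*u)) * t) by field_simp]
  ring

lemma scaled_exp_integral (k : ℕ) {L u : ℝ} (hL : 0 < L) (hu : 0 < u) :
    ∫ t in Ioi (0:ℝ), Real.exp (-(t/L)/u) * (t/L)^k
      = (k.factorial : ℝ) * L * u^(k+1) := by
  have hr : 0 < 1/(L*u) := by positivity
  simp_rw [scaled_eq k hL.ne' hu.ne']
  rw [MeasureTheory.integral_const_mul, pow_exp_integral k hr]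
  rw [div_pow, div_pow, one_pow, one_pow, div_div_eq_mul_div, div_one, mul_pow]
  field_simp
  ring

lemma scaled_exp_integrable (k : ℕ) {L u : ℝ} (hL : 0 < L) (hu : 0 < u) :
    IntegrableOn (fun t => Real.exp (-(t/L)/u) * (t/L)^k) (Ioi (0:ℝ)) := by
  have : (fun t => Real.exp (-(t/L)/u) * (t/L)^k)
      = fun t => (1/L)^k * (t^k * Real.exp (-((1/(L*u)) * t))) :=
    funext (scaled_eq k hL.ne' hu.ne')
  rw [this]
  exact (pow_exp_integrable k (by positivity)).const_mul _

/-- The joint density of the correlated exponential SNR pair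
integrates to one over (0,∞) × (0,∞). -/
theorem joint_density_integrates_to_one
    (lam1 lam2 ρ : ℝ) (hlam1 : 0 < lam1) (hlam2 : 0 < lam2)
    (hρ0 : 0 ≤ ρ) (hρ1 : ρ < 1) :
    ∫ β in Ioi (0:ℝ), ∫ α in Ioi (0:ℝ),
      (∑' k : ℕ, (ρ ^ k / ((k.factorial : ℝ) ^ 2 * (1 - ρ) ^ (2 * k + 1))) *
        (1 / (lam1 * lam2)) * Real.exp (-(α / lam1 + β / lam2) / (1 - ρ)) *
        (α / lam1) ^ k * (β / lam2) ^ k) = 1 := by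
  have hu : 0 < 1 - ρ := by linarith
  set u := 1 - ρ with hudef
  -- the function after inner integration
  set G : ℕ → ℝ → ℝ := fun k β =>
    (ρ * (β / lam2) / u) ^ k / (k.factorial : ℝ) * (Real.exp (-(β / lam2) / u) / lam2)
    with hG
  -- Step 1: inner integral evaluation for every β > 0
  have inner : ∀ β ∈ Ioi (0:ℝ),
      (∫ α in Ioi (0:ℝ),
        (∑' k : ℕ, (ρ ^ k / ((k.factorial : ℝ) ^ 2 * u ^ (2 * k + 1))) *
          (1 / (lam1 * lam2)) * Real.exp (-(α / lam1 + β / lam2) / u) *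
          (α / lam1) ^ k * (β / lam2) ^ k)) = ∑' k : ℕ, G k β := by
    intro β hβ
    have hβ' : (0:ℝ) < β := hβ
    set F : ℕ → ℝ → ℝ := fun k α =>
      (ρ ^ k / ((k.factorial : ℝ) ^ 2 * u ^ (2 * k + 1))) *
        (1 / (lam1 * lam2)) * Real.exp (-(α / lam1 + β / lam2) / u) *
        (α / lam1) ^ k * (β / lam2) ^ k with hF
    set C : ℕ → ℝ := fun k =>
      (ρ ^ k / ((k.factorial : ℝ) ^ 2 * u ^ (2 * k + 1))) *
        (1 / (lam1 * lam2)) * Real.exp (-(β / lam2) / u) * (β / lam2) ^ k with hC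
    have hFC : ∀ k α, F k α = C k * (Real.exp (-(α / lam1) / u) * (α / lam1) ^ k) := by
      intro k α
      simp only [hF, hC]
      rw [show -(α / lam1 + β / lam2) / u = -(α / lam1) / u + -(β / lam2) / u by ring,
        Real.exp_add]
      ring
    have hint : ∀ k : ℕ, Integrable (F k) (volume.restrict (Ioi (0:ℝ))) := by
      intro k
      have : F k = fun α => C k * (Real.exp (-(α / lam1) / u) * (α / lam1) ^ k) :=
        funext (hFC k)
      rw [this]
      exact (scaled_exp_integrable k hlam1 hu).const_mul _
    have hval : ∀ k : ℕ, (∫ α in Ioi (0:ℝ), F k α) = G k β := by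
      intro k
      have h1 : (∫ α in Ioi (0:ℝ), F k α)
          = C k * ∫ α in Ioi (0:ℝ), Real.exp (-(α / lam1) / u) * (α / lam1) ^ k := by
        simp_rw [hFC]
        exact MeasureTheory.integral_const_mul _ _
      rw [h1, scaled_exp_integral k hlam1 hu]
      simp only [hC, hG]
      have hk : (k.factorial : ℝ) ≠ 0 := Nat.cast_ne_zero.mpr k.factorial_ne_zero
      rw [show 2 * k + 1 = k + (k + 1) by ring, pow_add]
      simp only [div_pow, mul_pow]
      field_simp
    have hnorm : ∀ k : ℕ, (∫ α in Ioi (0:ℝ), ‖F k α‖) = G k β := by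
      intro k
      rw [← hval k]
      refine setIntegral_congr_fun measurableSet_Ioi (fun α (hα : 0 < α) => ?_)
      refine Real.norm_of_nonneg ?_
      rw [hFC]
      positivity
    have hsum : Summable (fun k => ∫ α in Ioi (0:ℝ), ‖F k α‖) := by
      simp_rw [hnorm]
      exact ((Real.summable_pow_div_factorial (ρ * (β / lam2) / u)).mul_right _)
    calc (∫ α in Ioi (0:ℝ), ∑' k : ℕ, F k α)
        = ∑' k : ℕ, ∫ α in Ioi (0:ℝ), F k α :=
          (integral_tsum_of_summable_integral_norm hint hsum).symm
      _ = ∑' k : ℕ, G k β := by exact tsum_congr hval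
  rw [setIntegral_congr_fun measurableSet_Ioi inner]
  -- Step 2: outer integral
  set D : ℕ → ℝ := fun k => (ρ / u) ^ k / ((k.factorial : ℝ) * lam2) with hD
  have hGD : ∀ k β, G k β = D k * (Real.exp (-(β / lam2) / u) * (β / lam2) ^ k) := by
    intro k β
    simp only [hG, hD]
    ring
  have hint2 : ∀ k : ℕ, Integrable (G k) (volume.restrict (Ioi (0:ℝ))) := by
    intro k
    have : G k = fun β => D k * (Real.exp (-(β / lam2) / u) * (β / lam2) ^ k) :=
      funext (hGD k)
    rw [this]
    exact (scaled_exp_integrable k hlam2 hu).const_mul _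
  have hval2 : ∀ k : ℕ, (∫ β in Ioi (0:ℝ), G k β) = ρ ^ k * u := by
    intro k
    have h1 : (∫ β in Ioi (0:ℝ), G k β)
        = D k * ∫ β in Ioi (0:ℝ), Real.exp (-(β / lam2) / u) * (β / lam2) ^ k := by
      simp_rw [hGD]
      exact MeasureTheory.integral_const_mul _ _
    rw [h1, scaled_exp_integral k hlam2 hu]
    simp only [hD]
    have hk : (k.factorial : ℝ) ≠ 0 := Nat.cast_ne_zero.mpr k.factorial_ne_zero
    simp only [div_pow]
    rw [pow_succ]
    field_simp
  have hnorm2 : ∀ k : ℕ, (∫ β in Ioi (0:ℝ), ‖G k β‖) = ρ ^ k * u := by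
    intro k
    rw [← hval2 k]
    refine setIntegral_congr_fun measurableSet_Ioi (fun β (hβ : 0 < β) => ?_)
    refine Real.norm_of_nonneg ?_
    rw [hGD]
    simp only [hD]
    positivity
  have hsum2 : Summable (fun k => ∫ β in Ioi (0:ℝ), ‖G k β‖) := by
    simp_rw [hnorm2]
    exact (summable_geometric_of_lt_one hρ0 hρ1).mul_right _
  calc (∫ β in Ioi (0:ℝ), ∑' k : ℕ, G k β)
      = ∑' k : ℕ, ∫ β in Ioi (0:ℝ), G k β :=
        (integral_tsum_of_summable_integral_norm hint2 hsum2).symm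
    _ = ∑' k : ℕ, ρ ^ k * u := tsum_congr hval2
    _ = 1 := by
        rw [tsum_mul_right, tsum_geometric_of_lt_one hρ0 hρ1, hudef]
        field_simp
        exact div_self hu.ne'
end

section
/- Let λ, μ > 0 and let k be a natural number. Then F_k := ∫_0^∞ x^k e^{-μx} / (1 + λx) dx = (1/λ) [ (-1/λ)^k exp(μ/λ) E_1(μ/λ) + Σ_{m=1}^{k} (m-1)! (-λ)^{m-k} / μ^m ]. -/
open MeasureTheory Real Set

/-- The exponential integral E₁(x) = ∫_1^∞ e^{-x t} / t dt. -/
noncomputable def E1 (x : ℝ) : ℝ := ∫ t in Ioi (1:ℝ), Real.exp (-x * t) / t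

lemma integrableOn_pow_exp (μ : ℝ) (hμ : 0 < μ) (k : ℕ) :
    IntegrableOn (fun x : ℝ => x ^ k * Real.exp (-μ * x)) (Ioi 0) := by
  have h := integrableOn_rpow_mul_exp_neg_mul_rpow (s := (k:ℝ)) (p := 1) (b := μ)
    (lt_of_lt_of_le neg_one_lt_zero (Nat.cast_nonneg k)) one_pos hμ
  refine h.congr_fun (fun x hx => ?_) measurableSet_Ioi
  simp only [Real.rpow_one, Real.rpow_natCast]

lemma integrableOn_Fk (lam μ : ℝ) (k : ℕ) (hlam : 0 < lam) (hμ : 0 < μ) :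
    IntegrableOn (fun x : ℝ => x ^ k * Real.exp (-μ * x) / (1 + lam * x)) (Ioi 0) := by
  refine Integrable.mono' (integrableOn_pow_exp μ hμ k) ?_ ?_
  · exact (Measurable.div (by fun_prop) (by fun_prop)).aestronglyMeasurable
  · filter_upwards [ae_restrict_mem measurableSet_Ioi] with x hx
    have hx0 : (0:ℝ) < x := hx
    have hd : (1:ℝ) ≤ 1 + lam * x := by nlinarith
    have hnn : 0 ≤ x ^ k * Real.exp (-μ * x) := by positivity
    rw [Real.norm_eq_abs, abs_of_nonneg (by positivity)]
    calc x ^ k * Real.exp (-μ * x) / (1 + lam * x)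
        ≤ x ^ k * Real.exp (-μ * x) / 1 := by
          apply div_le_div_of_nonneg_left hnn one_pos hd
      _ = x ^ k * Real.exp (-μ * x) := by rw [div_one]

lemma integral_pow_exp (μ : ℝ) (hμ : 0 < μ) (k : ℕ) :
    ∫ x in Ioi (0:ℝ), x ^ k * Real.exp (-μ * x) = k.factorial / μ ^ (k + 1) := by
  have h := Real.integral_rpow_mul_exp_neg_mul_Ioi (a := (k:ℝ) + 1) (by positivity) hμ
  have heq : ∀ x ∈ Ioi (0:ℝ),
      x ^ ((k:ℝ) + 1 - 1) * Real.exp (-(μ * x)) = x ^ k * Real.exp (-μ * x) := by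
    intro x hx
    rw [add_sub_cancel_right, Real.rpow_natCast, neg_mul]
  rw [setIntegral_congr_fun measurableSet_Ioi heq] at h
  rw [h, Real.Gamma_nat_eq_factorial,
    show ((k:ℝ) + 1) = ((k + 1 : ℕ) : ℝ) by push_cast; ring,
    Real.rpow_natCast, div_pow, one_pow]
  ring

lemma shift_one (h : ℝ → ℝ) : ∫ x in Ioi (0:ℝ), h (x + 1) = ∫ t in Ioi (1:ℝ), h t := by
  have hm : MeasurePreserving (fun x : ℝ => x + 1) volume volume :=
    measurePreserving_add_right volume 1
  have he : MeasurableEmbedding (fun x : ℝ => x + 1) :=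
    (Homeomorph.addRight (1:ℝ)).measurableEmbedding
  have := hm.setIntegral_preimage_emb he h (Ioi 1)
  simpa [preimage_add_const_Ioi] using this

lemma F0_eq (lam μ : ℝ) (hlam : 0 < lam) (hμ : 0 < μ) :
    ∫ x in Ioi (0:ℝ), Real.exp (-μ * x) / (1 + lam * x) =
      (1 / lam) * Real.exp (μ / lam) * E1 (μ / lam) := by
  set a := μ / lam with ha
  have key : (∫ x in Ioi (0:ℝ), Real.exp (-a * (lam * x + 1)) / (lam * x + 1)) =
      lam⁻¹ * E1 a := by
    have h1 := integral_comp_mul_left_Ioi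
      (fun y => Real.exp (-a * (y + 1)) / (y + 1)) 0 hlam
    simp only [mul_zero, smul_eq_mul] at h1
    rw [h1]
    congr 1
    have := shift_one (fun t => Real.exp (-a * t) / t)
    rw [this]
    rfl
  have hpt : ∀ x ∈ Ioi (0:ℝ), Real.exp (-a * (lam * x + 1)) / (lam * x + 1) =
      Real.exp (-a) * (Real.exp (-μ * x) / (1 + lam * x)) := by
    intro x hx
    have : -a * (lam * x + 1) = -μ * x + -a := by
      field_simp [ha]
      have hal : a * lam = μ := by rw [ha]; exact div_mul_cancel₀ μ hlam.ne'
      linear_combination (-x) * hal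
    rw [this, Real.exp_add, add_comm (lam * x) 1]
    ring
  rw [setIntegral_congr_fun measurableSet_Ioi hpt, integral_const_mul] at key
  have hea : Real.exp (-a) ≠ 0 := (Real.exp_pos _).ne'
  have : (∫ x in Ioi (0:ℝ), Real.exp (-μ * x) / (1 + lam * x)) =
      lam⁻¹ * E1 a / Real.exp (-a) := by
    rw [eq_div_iff hea, ← key]
    ring
  rw [this, Real.exp_neg]
  field_simp

/-- the closed form of F_k = ∫_0^∞ x^k e^{-μx}/(1+λx) dx
([16, 3.353.5]). -/
theorem Fk_closed_form (lam μ : ℝ) (k : ℕ) (hlam : 0 < lam) (hμ : 0 < μ) :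
    ∫ x in Ioi (0:ℝ), x ^ k * Real.exp (-μ * x) / (1 + lam * x) =
      (1 / lam) * ((-1 / lam) ^ k * Real.exp (μ / lam) * E1 (μ / lam) +
        ∑ m ∈ Finset.Icc 1 k,
          ((m - 1).factorial : ℝ) * (-lam) ^ ((m : ℤ) - (k : ℤ)) / μ ^ m) := by
  induction k with
  | zero =>
      simp only [pow_zero, one_mul, Finset.Icc_self, Nat.cast_zero]
      rw [show Finset.Icc 1 0 = (∅ : Finset ℕ) by rfl]
      simp only [Finset.sum_empty, add_zero]
      rw [← mul_assoc]
      exact F0_eq lam μ hlam hμ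
  | succ k ih =>
      have hlam' : lam ≠ 0 := hlam.ne'
      have hμ' : μ ≠ 0 := hμ.ne'
      have hnl : (-lam : ℝ) ≠ 0 := neg_ne_zero.mpr hlam'
      -- pointwise identity
      have hpt : ∀ x ∈ Ioi (0:ℝ),
          x ^ (k + 1) * Real.exp (-μ * x) / (1 + lam * x) =
          (1 / lam) * (x ^ k * Real.exp (-μ * x)
            - x ^ k * Real.exp (-μ * x) / (1 + lam * x)) := by
        intro x hx
        have hx0 : (0:ℝ) < x := hx
        have hd : (0:ℝ) < 1 + lam * x := by nlinarith
        field_simp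
        ring
      rw [setIntegral_congr_fun measurableSet_Ioi hpt, integral_const_mul,
        integral_sub (integrableOn_pow_exp μ hμ k) (integrableOn_Fk lam μ k hlam hμ),
        integral_pow_exp μ hμ k, ih]
      -- now pure algebra
      have hsum : ∑ m ∈ Finset.Icc 1 (k + 1),
          ((m - 1).factorial : ℝ) * (-lam) ^ ((m : ℤ) - ((k : ℤ) + 1)) / μ ^ m =
          (-lam)⁻¹ * (∑ m ∈ Finset.Icc 1 k,
            ((m - 1).factorial : ℝ) * (-lam) ^ ((m : ℤ) - (k : ℤ)) / μ ^ m)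
          + (k.factorial : ℝ) / μ ^ (k + 1) := by
        rw [Finset.sum_Icc_succ_top (by omega)]
        congr 1
        · rw [Finset.mul_sum]
          refine Finset.sum_congr rfl fun m hm => ?_
          have : (m : ℤ) - ((k : ℤ) + 1) = ((m : ℤ) - (k : ℤ)) - 1 := by ring
          rw [this, zpow_sub_one₀ hnl]
          ring
        · simp only [Nat.add_sub_cancel]
          have : ((k + 1 : ℕ) : ℤ) - ((k : ℤ) + 1) = 0 := by push_cast; ring
          rw [this, zpow_zero]
          ring
      push_cast
      rw [hsum]
      set E := Real.exp (μ / lam) * E1 (μ / lam) with hE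
      have h1 : (-1 / lam : ℝ) ^ (k + 1) = (-1 / lam) ^ k * (-1 / lam) := pow_succ _ _
      set S := ∑ m ∈ Finset.Icc 1 k,
        ((m - 1).factorial : ℝ) * (-lam) ^ ((m : ℤ) - (k : ℤ)) / μ ^ m with hS
      rw [mul_assoc ((-1/lam)^k : ℝ), mul_assoc ((-1/lam)^(k+1) : ℝ), ← hE, h1]
      field_simp
      ring
end

section
/- Let λ1, λ2 > 0, 0 ≤ ρ < 1, and let k be a natural number. Then the double integral R_k^1 := ∫_0^∞ ln(1+λ1 u) e^{-u/(1-ρ)} u^k ( ∫_0^{λ1 u / λ2} e^{-v/(1-ρ)} v^k dv ) du equals k! (1-ρ)^{k+1} F(λ1, k, 1/(1-ρ)) − k! Σ_{m=0}^{k} ((λ1/λ2)^m / m!) (1-ρ)^{k+1-m} F(λ1, k+m, (1 + λ1/λ2)/(1-ρ)). -/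
open MeasureTheory Real Set Filter

/-- F(λ,k,μ) = ∫_0^∞ ln(1+λx) e^{-μx} x^k dx. -/
noncomputable def F (lam : ℝ) (k : ℕ) (μ : ℝ) : ℝ :=
  ∫ x in Ioi (0:ℝ), Real.log (1 + lam * x) * Real.exp (-μ * x) * x ^ k

lemma aux_inner (σ : ℝ) (hσ : 0 < σ) (k : ℕ) (T : ℝ) :
    (∫ v in (0:ℝ)..T, Real.exp (-v/σ) * v^k)
      = (k.factorial : ℝ) * σ^(k+1)
        - Real.exp (-T/σ) * ∑ m ∈ Finset.range (k+1),
            ((k.factorial : ℝ)/(m.factorial : ℝ)) * (σ^(k+1)/σ^m) * T^m := by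
  have hσ' : σ ≠ 0 := hσ.ne'
  set c : ℕ → ℝ := fun m => ((k.factorial : ℝ)/(m.factorial : ℝ)) * (σ^(k+1)/σ^m) with hc
  set G : ℝ → ℝ := fun v => -(Real.exp (-v/σ) * ∑ m ∈ Finset.range (k+1), c m * v^m) with hG
  have hderiv : ∀ v : ℝ, HasDerivAt G (Real.exp (-v/σ) * v^k) v := by
    intro v
    have h1 : HasDerivAt (fun v : ℝ => -v/σ) (-1/σ) v := by
      simpa using ((hasDerivAt_id v).neg.div_const σ)
    have h2 : HasDerivAt (fun v : ℝ => Real.exp (-v/σ)) (Real.exp (-v/σ) * (-1/σ)) v := h1.exp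
    have hS : HasDerivAt (fun v : ℝ => ∑ m ∈ Finset.range (k+1), c m * v^m)
        (∑ m ∈ Finset.range (k+1), c m * (m * v^(m-1))) v := by
      apply HasDerivAt.fun_sum
      intro m _
      exact (hasDerivAt_pow m v).const_mul (c m)
    have := (h2.mul hS).neg
    refine this.congr_deriv ?_
    have key : ∑ m ∈ Finset.range (k+1), c m * (m * v^(m-1))
        = σ⁻¹ * (∑ m ∈ Finset.range (k+1), c m * v^m) - σ⁻¹ * c k * v^k := by
      rw [Finset.mul_sum]
      rw [Finset.sum_range_succ' (fun m => c m * (m * v^(m-1)))]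
      rw [Finset.sum_range_succ (fun m => σ⁻¹ * (c m * v^m))]
      simp only [Nat.cast_zero, zero_mul, mul_zero, add_zero, Nat.add_sub_cancel]
      rw [show σ⁻¹ * c k * v ^ k = σ⁻¹ * (c k * v ^ k) from mul_assoc _ _ _, add_sub_cancel_right]
      apply Finset.sum_congr rfl
      intro i hi
      have hi' : i ≤ k := (Finset.mem_range.mp hi).le
      have hfac : ((i+1).factorial : ℝ) = (i+1) * (i.factorial : ℝ) := by
        push_cast [Nat.factorial_succ]; ring
      have hne : (i.factorial : ℝ) ≠ 0 := Nat.cast_ne_zero.mpr (Nat.factorial_ne_zero i)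
      simp only [hc, hfac, pow_succ]
      push_cast
      field_simp
    have hck : σ⁻¹ * c k = 1 := by
      simp only [hc]
      rw [pow_succ]
      field_simp
    rw [key, mul_sub]
    rw [show σ⁻¹ * c k * v ^ k = v ^ k by rw [hck, one_mul]]
    ring
  have hcont : IntervalIntegrable (fun v => Real.exp (-v/σ) * v^k) volume 0 T := by
    apply Continuous.intervalIntegrable
    fun_prop
  rw [intervalIntegral.integral_eq_sub_of_hasDerivAt (fun v _ => hderiv v) hcont]
  simp only [hG]
  have h0 : ∑ m ∈ Finset.range (k+1), c m * (0:ℝ)^m = c 0 := by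
    rw [Finset.sum_range_succ' (fun m => c m * (0:ℝ)^m)]
    simp
  rw [h0]
  have : c 0 = (k.factorial : ℝ) * σ^(k+1) := by simp [hc]
  rw [this]
  simp only [neg_zero, zero_div, Real.exp_zero, one_mul]
  ring


lemma aux_int (lam μ : ℝ) (hl : 0 < lam) (hμ : 0 < μ) (n : ℕ) :
    IntegrableOn (fun x => Real.log (1 + lam*x) * Real.exp (-μ*x) * x^n) (Ioi (0:ℝ)) := by
  have hb : 0 < μ/2 := by linarith
  apply integrable_of_isBigO_exp_neg hb
  · apply ContinuousOn.mul
    · apply ContinuousOn.mul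
      · apply ContinuousOn.log
        · fun_prop
        · intro x hx
          have : (0:ℝ) ≤ x := hx
          positivity
      · fun_prop
    · fun_prop
  · rw [Asymptotics.isBigO_iff]
    refine ⟨lam, ?_⟩
    have h0 : Tendsto (fun x : ℝ => x^(n+1) * Real.exp (-(μ/2)*x)) atTop (nhds 0) := by
      have := tendsto_rpow_mul_exp_neg_mul_atTop_nhds_zero (n+1 : ℝ) (μ/2) hb
      apply this.congr'
      filter_upwards [eventually_gt_atTop (0:ℝ)] with x hx
      rw [← Real.rpow_natCast x (n+1)]
      norm_num
    have h1 : ∀ᶠ x : ℝ in atTop, x^(n+1) * Real.exp (-(μ/2)*x) < 1 :=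
      h0.eventually_lt_const one_pos
    filter_upwards [h1, eventually_ge_atTop (0:ℝ)] with x hx hx0
    have hlog0 : 0 ≤ Real.log (1 + lam*x) := by
      apply Real.log_nonneg; nlinarith
    have hlog : Real.log (1 + lam*x) ≤ lam * x := by
      have := Real.log_le_sub_one_of_pos (show (0:ℝ) < 1 + lam*x by nlinarith)
      linarith
    have hexp : Real.exp (-μ*x) = Real.exp (-(μ/2)*x) * Real.exp (-(μ/2)*x) := by
      rw [← Real.exp_add]; ring_nf
    rw [Real.norm_eq_abs, Real.norm_eq_abs, abs_of_nonneg (by positivity), abs_of_nonneg (Real.exp_pos _).le]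
    calc Real.log (1 + lam*x) * Real.exp (-μ*x) * x^n
        ≤ (lam * x) * Real.exp (-μ*x) * x^n := by
          apply mul_le_mul_of_nonneg_right (mul_le_mul_of_nonneg_right hlog (Real.exp_pos _).le)
          positivity
      _ = lam * (x^(n+1) * Real.exp (-(μ/2)*x)) * Real.exp (-(μ/2)*x) := by
          rw [hexp]; ring
      _ ≤ lam * 1 * Real.exp (-(μ/2)*x) := by
          apply mul_le_mul_of_nonneg_right _ (Real.exp_pos _).le
          apply mul_le_mul_of_nonneg_left hx.le hl.le
      _ = lam * Real.exp (-(μ/2)*x) := by ring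

/-- evaluation of the double integral R_k^1. -/
theorem Rk1_eval (lam1 lam2 ρ : ℝ) (k : ℕ) (hlam1 : 0 < lam1) (hlam2 : 0 < lam2)
    (hρ0 : 0 ≤ ρ) (hρ1 : ρ < 1) :
    (∫ u in Ioi (0:ℝ), Real.log (1 + lam1 * u) * Real.exp (-u / (1 - ρ)) * u ^ k *
        ∫ v in (0:ℝ)..(lam1 * u / lam2), Real.exp (-v / (1 - ρ)) * v ^ k) =
      (k.factorial : ℝ) * (1 - ρ) ^ (k + 1) * F lam1 k (1 / (1 - ρ)) -
        (k.factorial : ℝ) * ∑ m ∈ Finset.range (k + 1),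
          ((lam1 / lam2) ^ m / (m.factorial : ℝ)) * (1 - ρ) ^ (k + 1 - m) *
            F lam1 (k + m) ((1 + lam1 / lam2) / (1 - ρ)) := by
  have hσ : (0:ℝ) < 1 - ρ := by linarith
  set σ : ℝ := 1 - ρ with hσdef
  have hσ' : σ ≠ 0 := hσ.ne'
  set r : ℝ := lam1 / lam2 with hrdef
  have hr : 0 < r := div_pos hlam1 hlam2
  set C : ℕ → ℝ := fun m =>
    ((k.factorial : ℝ)/(m.factorial : ℝ)) * (σ^(k+1)/σ^m) * r^m with hC
  set f0 : ℝ → ℝ := fun x => Real.log (1 + lam1*x) * Real.exp (-(1/σ)*x) * x^k with hf0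
  set g : ℕ → ℝ → ℝ := fun m x =>
    Real.log (1 + lam1*x) * Real.exp (-((1+r)/σ)*x) * x^(k+m) with hg
  have hint0 : IntegrableOn f0 (Ioi (0:ℝ)) := aux_int lam1 (1/σ) hlam1 (by positivity) k
  have hintm : ∀ m, IntegrableOn (g m) (Ioi (0:ℝ)) := fun m =>
    aux_int lam1 ((1+r)/σ) hlam1 (by positivity) (k+m)
  have key : ∀ u ∈ Ioi (0:ℝ),
      Real.log (1 + lam1 * u) * Real.exp (-u / σ) * u ^ k *
        (∫ v in (0:ℝ)..(lam1 * u / lam2), Real.exp (-v / σ) * v ^ k)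
      = (k.factorial : ℝ) * σ^(k+1) * f0 u
        - ∑ m ∈ Finset.range (k+1), C m * g m u := by
    intro u _
    rw [aux_inner σ hσ k (lam1 * u / lam2)]
    have hT : lam1 * u / lam2 = r * u := by rw [hrdef]; ring
    rw [hT]
    have e1 : Real.exp (-u/σ) = Real.exp (-(1/σ)*u) := by congr 1; ring
    have e2 : Real.exp (-((1+r)/σ)*u) = Real.exp (-u/σ) * Real.exp (-(r*u)/σ) := by
      rw [← Real.exp_add]; congr 1; field_simp; ring
    rw [mul_sub, Finset.mul_sum]
    congr 1
    · rw [hf0]; simp only []; rw [e1]; ring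
    · rw [Finset.mul_sum]
      apply Finset.sum_congr rfl
      intro m _
      simp only [hC, hg]
      rw [e2, pow_add, mul_pow]
      ring
  rw [setIntegral_congr_fun measurableSet_Ioi key]
  rw [integral_sub ((hint0.const_mul _))
      (integrable_finset_sum _ (fun m _ => (hintm m).const_mul _))]
  rw [integral_const_mul, integral_finset_sum _ (fun m _ => (hintm m).const_mul _)]
  simp only [integral_const_mul]
  have hF0 : F lam1 k (1/σ) = ∫ u in Ioi (0:ℝ), f0 u := rfl
  have hFm : ∀ m, F lam1 (k+m) ((1+r)/σ) = ∫ u in Ioi (0:ℝ), g m u := fun m => rfl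
  rw [hF0, Finset.mul_sum]
  congr 1
  apply Finset.sum_congr rfl
  intro m hm
  rw [hFm m]
  have hmk : m ≤ k + 1 := by
    have := Finset.mem_range.mp hm; omega
  have hpow : σ ^ (k + 1 - m) = σ ^ (k+1) * (σ ^ m)⁻¹ := pow_sub₀ σ hσ' hmk
  rw [hpow]
  simp only [hC]
  have hmf : (m.factorial : ℝ) ≠ 0 := Nat.cast_ne_zero.mpr (Nat.factorial_ne_zero m)
  field_simp
end

section
/- Let λ1, λ2 > 0, 0 ≤ ρ < 1, and let k be a natural number. Then the double integral R_k^2 := ∫_0^∞ ln(1+λ2 v) e^{-v/(1-ρ)} v^k ( ∫_{λ2 v / λ1}^∞ e^{-u/(1-ρ)} u^k du ) dv equals k! Σ_{m=0}^{k} ((λ2/λ1)^m / m!) (1-ρ)^{k+1-m} F(λ2, k+m, (1 + λ2/λ1)/(1-ρ)). -/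
open MeasureTheory Real Set Filter Topology

lemma deriv_aux (s : ℝ) (hs : 0 < s) (k : ℕ) (u : ℝ) :
    HasDerivAt (fun u : ℝ => -(Real.exp (-u/s) *
      ∑ m ∈ Finset.range (k+1), (k.factorial : ℝ)/(m.factorial : ℝ) * u^m * s^(k+1-m)))
      (Real.exp (-u/s) * u^k) u := by
  have he : HasDerivAt (fun u : ℝ => Real.exp (-u/s)) (Real.exp (-u/s) * (-1/s)) u := by
    have := ((hasDerivAt_id u).neg.div_const s).exp
    simpa using this
  have hp : HasDerivAt (fun u : ℝ => ∑ m ∈ Finset.range (k+1),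
        (k.factorial : ℝ)/(m.factorial : ℝ) * u^m * s^(k+1-m))
      (∑ m ∈ Finset.range (k+1),
        (k.factorial : ℝ)/(m.factorial : ℝ) * (m * u^(m-1)) * s^(k+1-m)) u := by
    refine HasDerivAt.fun_sum fun m _ => ?_
    exact (((hasDerivAt_pow m u).const_mul ((k.factorial : ℝ)/(m.factorial : ℝ))).mul_const _)
  have h := (he.mul hp).neg
  refine h.congr_deriv ?_
  symm
  have key : (1/s) * (∑ m ∈ Finset.range (k+1),
        (k.factorial : ℝ)/(m.factorial : ℝ) * u^m * s^(k+1-m))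
      - (∑ m ∈ Finset.range (k+1),
        (k.factorial : ℝ)/(m.factorial : ℝ) * (m * u^(m-1)) * s^(k+1-m)) = u^k := by
    have h1 : (1/s) * (∑ m ∈ Finset.range (k+1),
          (k.factorial : ℝ)/(m.factorial : ℝ) * u^m * s^(k+1-m))
        = ∑ m ∈ Finset.range (k+1),
          (k.factorial : ℝ)/(m.factorial : ℝ) * u^m * s^(k-m) := by
      rw [Finset.mul_sum]
      refine Finset.sum_congr rfl fun m hm => ?_
      have hmk : m ≤ k := Nat.lt_succ_iff.mp (Finset.mem_range.mp hm)
      rw [show k+1-m = (k-m)+1 from (Nat.succ_sub hmk)]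
      rw [pow_succ]
      field_simp
    have h2 : (∑ m ∈ Finset.range (k+1),
          (k.factorial : ℝ)/(m.factorial : ℝ) * (m * u^(m-1)) * s^(k+1-m))
        = ∑ m ∈ Finset.range k,
          (k.factorial : ℝ)/(m.factorial : ℝ) * u^m * s^(k-m) := by
      rw [Finset.sum_range_succ']
      simp only [Nat.cast_zero, zero_mul, mul_zero, zero_mul, add_zero]
      refine Finset.sum_congr rfl fun m hm => ?_
      have hmk : m < k := Finset.mem_range.mp hm
      rw [show k+1-(m+1) = k-m from by omega, show (m+1)-1 = m from rfl]
      rw [Nat.factorial_succ]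
      push_cast
      have : (m.factorial : ℝ) ≠ 0 := Nat.cast_ne_zero.mpr m.factorial_ne_zero
      field_simp
    rw [h1, h2, Finset.sum_range_succ, add_sub_cancel_left, Nat.sub_self, pow_zero,
      mul_one, div_self (Nat.cast_ne_zero.mpr k.factorial_ne_zero), one_mul]
  calc Real.exp (-u/s) * u^k
      = Real.exp (-u/s) * ((1/s) * (∑ m ∈ Finset.range (k+1),
          (k.factorial : ℝ)/(m.factorial : ℝ) * u^m * s^(k+1-m))
        - (∑ m ∈ Finset.range (k+1),
          (k.factorial : ℝ)/(m.factorial : ℝ) * (m * u^(m-1)) * s^(k+1-m))) := by rw [key]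
    _ = _ := by ring

lemma inner_eval (s : ℝ) (hs : 0 < s) (k : ℕ) (a : ℝ) (ha : 0 ≤ a) :
    ∫ u in Ioi a, Real.exp (-u/s) * u^k
      = Real.exp (-a/s) * ∑ m ∈ Finset.range (k+1),
          (k.factorial : ℝ)/(m.factorial : ℝ) * a^m * s^(k+1-m) := by
  have htend : Tendsto (fun u : ℝ => -(Real.exp (-u/s) *
      ∑ m ∈ Finset.range (k+1), (k.factorial : ℝ)/(m.factorial : ℝ) * u^m * s^(k+1-m)))
      atTop (𝓝 0) := by
    have h0 : ∀ m : ℕ, Tendsto (fun u : ℝ => Real.exp (-u/s) * u^m) atTop (𝓝 0) := by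
      intro m
      have hc : Tendsto (fun u : ℝ => u/s) atTop atTop :=
        tendsto_id.atTop_div_const hs
      have := (tendsto_pow_mul_exp_neg_atTop_nhds_zero m).comp hc
      have h2 : Tendsto (fun u : ℝ => s^m * ((u/s)^m * Real.exp (-(u/s)))) atTop (𝓝 (s^m * 0)) :=
        this.const_mul _
      rw [mul_zero] at h2
      refine h2.congr fun u => ?_
      rw [div_pow, neg_div]
      field_simp
    have hsum : Tendsto (fun u : ℝ => ∑ m ∈ Finset.range (k+1),
        (k.factorial : ℝ)/(m.factorial : ℝ) * (Real.exp (-u/s) * u^m) * s^(k+1-m)) atTop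
        (𝓝 (∑ m ∈ Finset.range (k+1), (0:ℝ))) := by
      refine tendsto_finset_sum _ fun m _ => ?_
      have := ((h0 m).const_mul ((k.factorial : ℝ)/(m.factorial : ℝ))).mul_const (s^(k+1-m))
      simpa using this
    simp only [Finset.sum_const_zero] at hsum
    have := hsum.neg
    rw [neg_zero] at this
    refine this.congr fun u => ?_
    rw [Finset.mul_sum]
    congr 1
    refine Finset.sum_congr rfl fun m _ => ?_
    ring
  have := integral_Ioi_of_hasDerivAt_of_nonneg'
    (g := fun u : ℝ => -(Real.exp (-u/s) *
      ∑ m ∈ Finset.range (k+1), (k.factorial : ℝ)/(m.factorial : ℝ) * u^m * s^(k+1-m)))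
    (g' := fun u : ℝ => Real.exp (-u/s) * u^k)
    (fun u _ => deriv_aux s hs k u)
    (fun u hu => mul_nonneg (Real.exp_nonneg _) (pow_nonneg (le_trans ha (le_of_lt hu)) k))
    htend
  rw [this]
  ring

lemma pow_exp_int (c : ℝ) (hc : 0 < c) (n : ℕ) :
    IntegrableOn (fun x : ℝ => x ^ n * Real.exp (-c * x)) (Ioi 0) := by
  have h := integrableOn_rpow_mul_exp_neg_mul_rpow (p := 1) (s := (n : ℝ))
    (by exact_mod_cast neg_one_lt_zero.trans_le (Nat.cast_nonneg n)) zero_lt_one hc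
  refine h.congr_fun (fun x hx => ?_) measurableSet_Ioi
  simp only [Real.rpow_natCast, Real.rpow_one]

lemma log_int (lam c : ℝ) (hlam : 0 < lam) (hc : 0 < c) (n : ℕ) :
    IntegrableOn (fun x : ℝ => Real.log (1 + lam * x) * Real.exp (-c * x) * x ^ n)
      (Ioi 0) := by
  have hmaj : IntegrableOn (fun x : ℝ => lam * (x ^ (n+1) * Real.exp (-c * x))) (Ioi 0) :=
    (pow_exp_int c hc (n+1)).const_mul lam
  have hmeas : AEStronglyMeasurable
      (fun x : ℝ => Real.log (1 + lam * x) * Real.exp (-c * x) * x ^ n)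
      (volume.restrict (Ioi 0)) := by
    refine ContinuousOn.aestronglyMeasurable ?_ measurableSet_Ioi
    refine ContinuousOn.mul (ContinuousOn.mul ?_ (Continuous.continuousOn (by continuity)))
      (Continuous.continuousOn (by continuity))
    refine ContinuousOn.log (Continuous.continuousOn (by continuity)) fun x hx => ?_
    have : (0:ℝ) < x := hx
    positivity
  refine hmaj.mono' hmeas ?_
  rw [ae_restrict_iff' measurableSet_Ioi]
  filter_upwards with x
  intro hx
  have hx0 : (0:ℝ) < x := hx
  have h1 : 0 ≤ Real.log (1 + lam * x) := Real.log_nonneg (by nlinarith)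
  have h2 : Real.log (1 + lam * x) ≤ lam * x := by
    have := Real.log_le_sub_one_of_pos (x := 1 + lam * x) (by nlinarith)
    linarith
  rw [Real.norm_eq_abs, abs_of_nonneg (by positivity)]
  have hexp : (0:ℝ) < Real.exp (-c * x) := Real.exp_pos _
  calc Real.log (1 + lam * x) * Real.exp (-c * x) * x ^ n
      ≤ (lam * x) * Real.exp (-c * x) * x ^ n := by
        apply mul_le_mul_of_nonneg_right (mul_le_mul_of_nonneg_right h2 hexp.le)
        positivity
    _ = lam * (x ^ (n+1) * Real.exp (-c * x)) := by ring

/-- evaluation of the double integral R_k^2. -/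
theorem Rk2_eval (lam1 lam2 ρ : ℝ) (k : ℕ) (hlam1 : 0 < lam1) (hlam2 : 0 < lam2)
    (hρ0 : 0 ≤ ρ) (hρ1 : ρ < 1) :
    (∫ v in Ioi (0:ℝ), Real.log (1 + lam2 * v) * Real.exp (-v / (1 - ρ)) * v ^ k *
        ∫ u in Ioi (lam2 * v / lam1), Real.exp (-u / (1 - ρ)) * u ^ k) =
      (k.factorial : ℝ) * ∑ m ∈ Finset.range (k + 1),
        ((lam2 / lam1) ^ m / (m.factorial : ℝ)) * (1 - ρ) ^ (k + 1 - m) *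
          F lam2 (k + m) ((1 + lam2 / lam1) / (1 - ρ)) := by
  set s : ℝ := 1 - ρ with hsdef
  have hs : 0 < s := by simp only [hsdef]; linarith
  set μ : ℝ := (1 + lam2 / lam1) / s with hμdef
  have hμ : 0 < μ := by
    have : 0 < 1 + lam2 / lam1 := by positivity
    positivity
  have step1 : (∫ v in Ioi (0:ℝ), Real.log (1 + lam2 * v) * Real.exp (-v / s) * v ^ k *
        ∫ u in Ioi (lam2 * v / lam1), Real.exp (-u / s) * u ^ k)
      = ∫ v in Ioi (0:ℝ), ∑ m ∈ Finset.range (k+1),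
          ((k.factorial : ℝ)/(m.factorial : ℝ) * (lam2/lam1)^m * s^(k+1-m)) *
            (Real.log (1 + lam2 * v) * Real.exp (-μ * v) * v ^ (k+m)) := by
    refine setIntegral_congr_fun measurableSet_Ioi fun v hv => ?_
    have hv0 : (0:ℝ) < v := hv
    rw [inner_eval s hs k (lam2 * v / lam1) (by positivity)]
    rw [Finset.mul_sum, Finset.mul_sum]
    refine Finset.sum_congr rfl fun m hm => ?_
    have hexp : Real.exp (-v/s) * Real.exp (-(lam2 * v / lam1)/s) = Real.exp (-μ * v) := by
      rw [← Real.exp_add]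
      congr 1
      rw [hμdef]
      field_simp
      ring
    have hpow : (lam2 * v / lam1)^m = (lam2/lam1)^m * v^m := by
      rw [show lam2 * v / lam1 = lam2/lam1 * v by ring, mul_pow]
    rw [hpow, pow_add, ← hexp]
    ring
  rw [step1]
  rw [integral_finset_sum _ (fun m _ =>
    ((log_int lam2 μ hlam2 hμ (k+m)).const_mul _))]
  rw [Finset.mul_sum]
  refine Finset.sum_congr rfl fun m hm => ?_
  rw [MeasureTheory.integral_const_mul]
  have hF : (∫ v in Ioi (0:ℝ), Real.log (1 + lam2 * v) * Real.exp (-μ * v) * v ^ (k+m))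
      = F lam2 (k+m) μ := rfl
  rw [hF]
  ring
end

section
/- Let λ1, λ2 > 0 and 0 ≤ ρ < 1. The secrecy-capacity integrand is integrable: the function (α,β) ↦ max(ln(1+α) − ln(1+β), 0) · f(α,β) is Lebesgue integrable on (0,∞) × (0,∞), where f(α,β) = Σ_{k=0}^∞ c_k (1/(λ1 λ2)) exp(-(α/λ1 + β/λ2)/(1-ρ)) (α/λ1)^k (β/λ2)^k and c_k = ρ^k / ((k!)^2 (1-ρ)^{2k+1}). -/
open MeasureTheory Real Set

set_option maxHeartbeats 2000000

/-- tsum of the exponential series. -/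
lemma aux_tsum_exp (z : ℝ) : ∑' k : ℕ, z ^ k / (k.factorial : ℝ) = Real.exp z := by
  rw [Real.exp_eq_exp_ℝ, NormedSpace.exp_eq_tsum_div]

/-- measurability of a pointwise-summable series of measurable functions. -/
lemma aux_meas_tsum {α : Type*} [MeasurableSpace α] {f : ℕ → α → ℝ}
    (hf : ∀ i, Measurable (f i)) (hs : ∀ x, Summable fun i => f i x) :
    Measurable fun x => ∑' i, f i x := by
  apply measurable_of_tendsto_metrizable (f := fun n x => ∑ i ∈ Finset.range n, f i x)
    (fun n => Finset.measurable_sum _ fun i _ => hf i)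
  rw [tendsto_pi_nhds]
  intro x
  exact (hs x).hasSum.tendsto_sum_nat

/-- single term of exponential series vs exp (we use the Mathlib lemma). -/
lemma aux_term_le_exp {z : ℝ} (hz : 0 ≤ z) (k : ℕ) :
    z ^ k / (k.factorial : ℝ) ≤ Real.exp z :=
  Real.pow_div_factorial_le_exp _ hz k

/-- the secrecy-capacity integrand is Lebesgue integrable
on (0,∞) × (0,∞). -/
theorem secrecy_integrand_integrable
    (lam1 lam2 ρ : ℝ) (hlam1 : 0 < lam1) (hlam2 : 0 < lam2)
    (hρ0 : 0 ≤ ρ) (hρ1 : ρ < 1) :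
    IntegrableOn
      (fun p : ℝ × ℝ =>
        max (Real.log (1 + p.1) - Real.log (1 + p.2)) 0 *
          ∑' k : ℕ, (ρ ^ k / ((k.factorial : ℝ) ^ 2 * (1 - ρ) ^ (2 * k + 1))) *
            (1 / (lam1 * lam2)) * Real.exp (-(p.1 / lam1 + p.2 / lam2) / (1 - ρ)) *
            (p.1 / lam1) ^ k * (p.2 / lam2) ^ k)
      (Ioi (0:ℝ) ×ˢ Ioi (0:ℝ)) := by
  set s : ℝ := 1 - ρ with hs_def
  have hs : 0 < s := by rw [hs_def]; linarith
  set r : ℝ := Real.sqrt ρ with hr_def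
  have hr0 : 0 ≤ r := Real.sqrt_nonneg ρ
  have hr2 : r ^ 2 = ρ := Real.sq_sqrt hρ0
  have hr1 : r < 1 := by nlinarith
  set a : ℝ := (1 - r) / (lam1 * s) with ha_def
  set b : ℝ := (1 - r) / (lam2 * s) with hb_def
  have ha : 0 < a := by
    apply div_pos (by linarith) (by positivity)
  have hb : 0 < b := by
    apply div_pos (by linarith) (by positivity)
  set K : ℝ := (2 / a) * (1 / (lam1 * lam2 * s)) with hK_def
  -- the term of the series
  set t : ℕ → ℝ × ℝ → ℝ := fun k p =>
    (ρ ^ k / ((k.factorial : ℝ) ^ 2 * s ^ (2 * k + 1))) *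
      (1 / (lam1 * lam2)) * Real.exp (-(p.1 / lam1 + p.2 / lam2) / s) *
      (p.1 / lam1) ^ k * (p.2 / lam2) ^ k with ht_def
  suffices H : IntegrableOn
      (fun p : ℝ × ℝ => max (Real.log (1 + p.1) - Real.log (1 + p.2)) 0 * ∑' k : ℕ, t k p)
      (Ioi (0:ℝ) ×ˢ Ioi (0:ℝ)) by
    simpa only [ht_def] using H
  clear_value t K b a r s
  -- everywhere summability
  have hsum : ∀ p : ℝ × ℝ, Summable fun k => t k p := by
    intro p
    have key : ∀ k : ℕ,
        ‖t k p‖ ≤ ((1 / (lam1 * lam2 * s)) * Real.exp (-(p.1 / lam1 + p.2 / lam2) / s)) *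
          (|ρ * (p.1 / lam1) * (p.2 / lam2) / s ^ 2| ^ k / (k.factorial : ℝ)) := by
      intro k
      have hfac : (1 : ℝ) ≤ (k.factorial : ℝ) := by exact_mod_cast k.factorial_pos
      have hterm : t k p = ((1 / (lam1 * lam2 * s)) * Real.exp (-(p.1 / lam1 + p.2 / lam2) / s)) *
          ((ρ * (p.1 / lam1) * (p.2 / lam2) / s ^ 2) ^ k / ((k.factorial : ℝ) ^ 2)) := by
        have hfk : ((k.factorial : ℝ)) ≠ 0 := by exact_mod_cast k.factorial_ne_zero
        have hs0 : s ≠ 0 := hs.ne'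
        simp only [ht_def]
        field_simp
        have hss : s ^ (k * 2) * s⁻¹ ^ (k * 2) = 1 := by rw [← mul_pow, mul_inv_cancel₀ hs0, one_pow]
        linear_combination (-(ρ ^ k * s * p.1 ^ k * lam1⁻¹ ^ k * p.2 ^ k * lam2⁻¹ ^ k)) * hss
      rw [hterm, norm_mul, norm_div]
      have h1 : ‖((1 : ℝ) / (lam1 * lam2 * s)) * Real.exp (-(p.1 / lam1 + p.2 / lam2) / s)‖ =
          (1 / (lam1 * lam2 * s)) * Real.exp (-(p.1 / lam1 + p.2 / lam2) / s) := by
        rw [Real.norm_eq_abs, abs_of_nonneg (by positivity)]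
      rw [h1]
      apply mul_le_mul_of_nonneg_left _ (by positivity)
      rw [Real.norm_eq_abs, Real.norm_eq_abs, abs_pow, abs_pow]
      have h2 : |(k.factorial : ℝ)| ^ 2 = (k.factorial : ℝ) ^ 2 := by
        rw [abs_of_nonneg (by positivity)]
      rw [h2]
      apply div_le_div_of_nonneg_left (by positivity) (by positivity)
      nlinarith [abs_nonneg (ρ * (p.1 / lam1) * (p.2 / lam2) / s ^ 2)]
    exact Summable.of_norm_bounded
      ((Real.summable_pow_div_factorial _).mul_left _) key
  -- measurability of the full integrand
  have hmeas : Measurable (fun p : ℝ × ℝ =>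
      max (Real.log (1 + p.1) - Real.log (1 + p.2)) 0 * ∑' k : ℕ, t k p) := by
    apply Measurable.mul
    · exact ((Real.measurable_log.comp (measurable_fst.const_add 1)).sub
        (Real.measurable_log.comp (measurable_snd.const_add 1))).max measurable_const
    · apply aux_meas_tsum _ hsum
      intro k
      simp only [ht_def]
      apply Measurable.mul
      apply Measurable.mul
      apply Measurable.mul
      · exact measurable_const
      · exact (Real.measurable_exp.comp
          (((measurable_fst.div_const lam1).add (measurable_snd.div_const lam2)).neg.div_const s))
      · exact (measurable_fst.div_const lam1).pow_const k
      · exact (measurable_snd.div_const lam2).pow_const k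
  -- the dominating function
  have hg : IntegrableOn (fun p : ℝ × ℝ =>
      K * (Real.exp (-(a / 2) * p.1) * Real.exp (-b * p.2))) (Ioi (0:ℝ) ×ˢ Ioi (0:ℝ)) := by
    apply Integrable.const_mul
    have h := (exp_neg_integrableOn_Ioi 0 (half_pos ha)).mul_prod (exp_neg_integrableOn_Ioi 0 hb)
    rw [Measure.prod_restrict, ← Measure.volume_eq_prod] at h
    exact h
  -- the pointwise bound
  apply Integrable.mono' hg (hmeas.aestronglyMeasurable.restrict)
  rw [ae_restrict_iff' (measurableSet_Ioi.prod measurableSet_Ioi)]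
  apply Filter.Eventually.of_forall
  rintro ⟨x, y⟩ ⟨hx, hy⟩
  simp only [mem_Ioi] at hx hy
  -- each term is nonnegative
  have htnn : ∀ k, 0 ≤ t k (x, y) := by
    intro k
    simp only [ht_def]
    positivity
  have hT0 : 0 ≤ ∑' k, t k (x, y) := tsum_nonneg htnn
  -- bound on the max factor
  have hmaxle : max (Real.log (1 + x) - Real.log (1 + y)) 0 ≤ x := by
    apply max_le _ hx.le
    have h1 : Real.log (1 + x) ≤ x := by
      have := Real.log_le_sub_one_of_pos (show (0:ℝ) < 1 + x by linarith)
      linarith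
    have h2 : 0 ≤ Real.log (1 + y) := Real.log_nonneg (by linarith)
    linarith
  -- bound on the tsum
  have hTle : ∑' k, t k (x, y) ≤
      (1 / (lam1 * lam2 * s)) * Real.exp (-(a * x) - b * y) := by
    have hbd : ∀ k, t k (x, y) ≤
        ((1 / (lam1 * lam2 * s)) * Real.exp (-(x / lam1 + y / lam2) / s) *
          Real.exp (r * (y / lam2) / s)) * ((r * (x / lam1) / s) ^ k / (k.factorial : ℝ)) := by
      intro k
      have hterm : t k (x, y) =
          ((1 / (lam1 * lam2 * s)) * Real.exp (-(x / lam1 + y / lam2) / s)) *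
          ((r * (x / lam1) / s) ^ k / (k.factorial : ℝ)) *
          ((r * (y / lam2) / s) ^ k / (k.factorial : ℝ)) := by
        simp only [ht_def]
        have : ρ ^ k = r ^ k * r ^ k := by
          rw [← hr2]; ring
        rw [this]
        have hfk : ((k.factorial : ℝ)) ≠ 0 := by exact_mod_cast k.factorial_ne_zero
        have hs0 : s ≠ 0 := hs.ne'
        field_simp
        have hss : s ^ (k * 2) * s⁻¹ ^ (k * 2) = 1 := by rw [← mul_pow, mul_inv_cancel₀ hs0, one_pow]
        linear_combination (-(r ^ (k * 2) * s * x ^ k * lam1⁻¹ ^ k * y ^ k * lam2⁻¹ ^ k)) * hss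
      rw [hterm]
      rw [mul_assoc ((1 / (lam1 * lam2 * s)) * Real.exp (-(x / lam1 + y / lam2) / s))]
      rw [mul_comm ((r * (x / lam1) / s) ^ k / (k.factorial : ℝ))]
      rw [← mul_assoc]
      apply mul_le_mul_of_nonneg_right _ (by positivity)
      apply mul_le_mul_of_nonneg_left _ (by positivity)
      exact aux_term_le_exp (by positivity) k
    have hsum2 : Summable fun k => ((1 / (lam1 * lam2 * s)) *
        Real.exp (-(x / lam1 + y / lam2) / s) * Real.exp (r * (y / lam2) / s)) *
        ((r * (x / lam1) / s) ^ k / (k.factorial : ℝ)) :=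
      (Real.summable_pow_div_factorial _).mul_left _
    calc ∑' k, t k (x, y) ≤ ∑' k, ((1 / (lam1 * lam2 * s)) *
          Real.exp (-(x / lam1 + y / lam2) / s) * Real.exp (r * (y / lam2) / s)) *
          ((r * (x / lam1) / s) ^ k / (k.factorial : ℝ)) :=
        by exact Summable.tsum_le_tsum hbd (hsum (x, y)) hsum2
      _ = ((1 / (lam1 * lam2 * s)) * Real.exp (-(x / lam1 + y / lam2) / s) *
          Real.exp (r * (y / lam2) / s)) * Real.exp (r * (x / lam1) / s) := by
        rw [tsum_mul_left, aux_tsum_exp]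
      _ = (1 / (lam1 * lam2 * s)) * Real.exp (-(a * x) - b * y) := by
        rw [mul_assoc, mul_assoc, ← Real.exp_add, ← Real.exp_add]
        congr 1
        congr 1
        rw [ha_def, hb_def]
        field_simp
        ring
  -- combine everything
  have hnorm : ‖max (Real.log (1 + x) - Real.log (1 + y)) 0 * ∑' k, t k (x, y)‖ =
      max (Real.log (1 + x) - Real.log (1 + y)) 0 * ∑' k, t k (x, y) := by
    rw [Real.norm_eq_abs, abs_of_nonneg (mul_nonneg (le_max_right _ _) hT0)]
  show ‖max (Real.log (1 + x) - Real.log (1 + y)) 0 * ∑' k, t k (x, y)‖ ≤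
      K * (Real.exp (-(a / 2) * x) * Real.exp (-b * y))
  rw [hnorm]
  calc max (Real.log (1 + x) - Real.log (1 + y)) 0 * ∑' k, t k (x, y)
      ≤ x * ((1 / (lam1 * lam2 * s)) * Real.exp (-(a * x) - b * y)) := by
        apply mul_le_mul hmaxle hTle hT0 hx.le
    _ = (1 / (lam1 * lam2 * s)) * ((x * Real.exp (-(a * x))) * Real.exp (-(b * y))) := by
        rw [show -(a * x) - b * y = -(a * x) + -(b * y) by ring, Real.exp_add]
        ring
    _ ≤ K * (Real.exp (-(a / 2) * x) * Real.exp (-b * y)) := by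
        have hx2 : x * Real.exp (-(a * x)) ≤ (2 / a) * Real.exp (-(a / 2) * x) := by
          have h1 : a / 2 * x ≤ Real.exp (a / 2 * x) := by
            have := Real.add_one_le_exp (a / 2 * x)
            linarith
          have h2 : x ≤ (2 / a) * Real.exp (a / 2 * x) := by
            rw [div_mul_eq_mul_div, le_div_iff₀ ha]
            nlinarith [h1]
          calc x * Real.exp (-(a * x)) ≤ ((2 / a) * Real.exp (a / 2 * x)) * Real.exp (-(a * x)) :=
                mul_le_mul_of_nonneg_right h2 (Real.exp_nonneg _)
            _ = (2 / a) * Real.exp (-(a / 2) * x) := by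
                rw [mul_assoc, ← Real.exp_add]
                congr 2
                ring
        rw [hK_def]
        calc (1 / (lam1 * lam2 * s)) * ((x * Real.exp (-(a * x))) * Real.exp (-(b * y)))
            ≤ (1 / (lam1 * lam2 * s)) *
              (((2 / a) * Real.exp (-(a / 2) * x)) * Real.exp (-(b * y))) := by
              apply mul_le_mul_of_nonneg_left _ (by positivity)
              exact mul_le_mul_of_nonneg_right hx2 (Real.exp_nonneg _)
          _ = (2 / a) * (1 / (lam1 * lam2 * s)) *
              (Real.exp (-(a / 2) * x) * Real.exp (-b * y)) := by
              rw [neg_mul]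
              ring
end

section
/- (Theorem 1) Let λ1, λ2 > 0 and 0 ≤ ρ < 1. The average secrecy capacity over the correlated Rayleigh fading wiretap channel is C_s = ∫_0^∞ ∫_0^∞ max(ln(1+α) − ln(1+β), 0) f(α,β) dα dβ = Σ_{k=0}^∞ c_k [ k! (1-ρ)^{k+1} F(λ1, k, 1/(1-ρ)) − k! Σ_{m=0}^{k} ((λ1/λ2)^m / m!) (1-ρ)^{k+1-m} F(λ1, k+m, (1 + λ1/λ2)/(1-ρ)) − k! Σ_{m=0}^{k} ((λ2/λ1)^m / m!) (1-ρ)^{k+1-m} F(λ2, k+m, (1 + λ2/λ1)/(1-ρ)) ]. -/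
open MeasureTheory Real Set

namespace ASC

/-- Antiderivative of `x ↦ exp (-q*x) * x^k`. -/
noncomputable def Phi (q : ℝ) (k : ℕ) (x : ℝ) : ℝ :=
  -Real.exp (-q * x) * ∑ m ∈ Finset.range (k + 1),
    ((k.factorial : ℝ) / (m.factorial : ℝ)) * x ^ m / q ^ (k + 1 - m)

lemma hasDerivAt_Phi {q : ℝ} (hq : q ≠ 0) (k : ℕ) (x : ℝ) :
    HasDerivAt (Phi q k) (Real.exp (-q * x) * x ^ k) x := by
  set C : ℕ → ℝ := fun m => ((k.factorial : ℝ) / (m.factorial : ℝ)) / q ^ (k + 1 - m) with hC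
  have hS : HasDerivAt (fun x => ∑ m ∈ Finset.range (k + 1), C m * x ^ m)
      (∑ m ∈ Finset.range (k + 1), C m * (m * x ^ (m - 1))) x := by
    refine HasDerivAt.fun_sum fun m _ => ?_
    exact (hasDerivAt_pow m x).const_mul (C m)
  have he : HasDerivAt (fun x => -Real.exp (-q * x)) (q * Real.exp (-q * x)) x := by
    have h1 : HasDerivAt (fun x : ℝ => -q * x) (-q) x := by
      simpa using (hasDerivAt_id x).const_mul (-q)
    have := (h1.exp).fun_neg
    exact this.congr_deriv (by ring)
  have hPhi_eq : Phi q k = fun y => -Real.exp (-q * y) * ∑ m ∈ Finset.range (k + 1), C m * y ^ m := by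
    funext y
    unfold Phi
    congr 1
    refine Finset.sum_congr rfl fun m _ => ?_
    rw [hC]; ring
  have hphi : HasDerivAt (Phi q k)
      (q * Real.exp (-q * x) * (∑ m ∈ Finset.range (k + 1), C m * x ^ m)
        + (-Real.exp (-q * x)) * (∑ m ∈ Finset.range (k + 1), C m * (m * x ^ (m - 1)))) x := by
    rw [hPhi_eq]
    exact he.mul hS
  have key : q * (∑ m ∈ Finset.range (k + 1), C m * x ^ m)
      - (∑ m ∈ Finset.range (k + 1), C m * (m * x ^ (m - 1))) = x ^ k := by
    have hterm : ∀ i ∈ Finset.range k,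
        C (i + 1) * (((i + 1 : ℕ) : ℝ) * x ^ (i + 1 - 1)) = q * (C i * x ^ i) := by
      intro i hi
      have hik : i ≤ k := (Finset.mem_range.mp hi).le
      rw [hC]
      simp only [Nat.add_sub_cancel, Nat.succ_sub_succ]
      have hfac : (((i + 1).factorial : ℝ)) = (i + 1) * (i.factorial : ℝ) := by
        rw [Nat.factorial_succ]; push_cast; ring
      have hpow : q ^ (k + 1 - i) = q ^ (k - i) * q := by
        have : k + 1 - i = (k - i) + 1 := by omega
        rw [this, pow_succ]
      rw [hpow, hfac]
      have h1 : (i.factorial : ℝ) ≠ 0 := Nat.cast_ne_zero.mpr i.factorial_ne_zero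
      have h2 : ((i : ℝ) + 1) ≠ 0 := by positivity
      field_simp
      simp only [Nat.sub_zero]; push_cast
      ring
    have hCk : q * (C k * x ^ k) = x ^ k := by
      rw [hC]
      have h1 : k + 1 - k = 1 := by omega
      simp only [h1, pow_one]
      have h2 : (k.factorial : ℝ) ≠ 0 := Nat.cast_ne_zero.mpr k.factorial_ne_zero
      field_simp
    rw [Finset.sum_range_succ' (fun m => C m * (m * x ^ (m - 1))), Finset.sum_range_succ,
      Finset.sum_congr rfl hterm]
    simp only [Nat.cast_zero, zero_mul, mul_zero, add_zero, mul_add, Finset.mul_sum]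
    rw [hCk]; ring
  convert hphi using 1
  rw [← key]; ring

lemma tendsto_exp_neg_mul_pow {q : ℝ} (hq : 0 < q) (m : ℕ) :
    Filter.Tendsto (fun x : ℝ => Real.exp (-q * x) * x ^ m) Filter.atTop (nhds 0) := by
  have h1 := tendsto_pow_mul_exp_neg_atTop_nhds_zero m
  have h2 : Filter.Tendsto (fun x : ℝ => q * x) Filter.atTop Filter.atTop :=
    Filter.Tendsto.const_mul_atTop hq Filter.tendsto_id
  have h3 := (h1.comp h2).const_mul (1 / q ^ m)
  rw [mul_zero] at h3
  refine h3.congr fun x => ?_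
  simp only [Function.comp]
  rw [mul_pow]
  field_simp

lemma tendsto_Phi {q : ℝ} (hq : 0 < q) (k : ℕ) :
    Filter.Tendsto (Phi q k) Filter.atTop (nhds 0) := by
  have : Phi q k = fun x => ∑ m ∈ Finset.range (k + 1),
      (-(((k.factorial : ℝ) / (m.factorial : ℝ)) / q ^ (k + 1 - m))) *
        (Real.exp (-q * x) * x ^ m) := by
    funext x
    unfold Phi
    rw [neg_mul, Finset.mul_sum, ← Finset.sum_neg_distrib]
    exact Finset.sum_congr rfl fun m _ => by ring
  rw [this]
  have h0 : (0 : ℝ) = ∑ m ∈ Finset.range (k + 1),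
      (-(((k.factorial : ℝ) / (m.factorial : ℝ)) / q ^ (k + 1 - m))) * (0 : ℝ) := by simp
  rw [h0]
  exact tendsto_finset_sum _ fun m _ => (tendsto_exp_neg_mul_pow hq m).const_mul _

end ASC

namespace ASC2
open ASC

variable {q : ℝ}

lemma Phi_zero (hq : q ≠ 0) (k : ℕ) :
    Phi q k 0 = -((k.factorial : ℝ) / q ^ (k + 1)) := by
  unfold Phi
  rw [Finset.sum_eq_single 0 (fun m _ hm => by
    rw [zero_pow hm]; ring) (by intro h; simp at h)]
  simp

lemma cont_exp_pow (q : ℝ) (k : ℕ) : Continuous (fun x : ℝ => Real.exp (-q * x) * x ^ k) :=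
  (Real.continuous_exp.comp (continuous_const.mul continuous_id)).mul (continuous_pow k)

lemma integrableOn_exp_pow (hq : 0 < q) (k : ℕ) {c : ℝ} (hc : 0 ≤ c) :
    IntegrableOn (fun x => Real.exp (-q * x) * x ^ k) (Ioi c) :=
  integrableOn_Ioi_deriv_of_nonneg' (fun x _ => hasDerivAt_Phi hq.ne' k x)
    (fun x hx => by
      have : (0:ℝ) < x := lt_of_le_of_lt hc hx
      positivity)
    (tendsto_Phi hq k)

lemma integral_Ioi_exp_pow (hq : 0 < q) (k : ℕ) {c : ℝ} (hc : 0 ≤ c) :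
    ∫ x in Ioi c, Real.exp (-q * x) * x ^ k = -Phi q k c := by
  rw [integral_Ioi_of_hasDerivAt_of_tendsto' (fun x _ => hasDerivAt_Phi hq.ne' k x)
    (integrableOn_exp_pow hq k hc) (tendsto_Phi hq k)]
  ring

lemma integral_Ioc_exp_pow (hq : 0 < q) (k : ℕ) {c : ℝ} (hc : 0 ≤ c) :
    ∫ x in Ioc 0 c, Real.exp (-q * x) * x ^ k = Phi q k c - Phi q k 0 := by
  rw [← intervalIntegral.integral_of_le hc]
  exact intervalIntegral.integral_eq_sub_of_hasDerivAt
    (fun x _ => hasDerivAt_Phi hq.ne' k x) ((cont_exp_pow q k).intervalIntegrable 0 c)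

lemma meas_log_exp_pow (q : ℝ) (n : ℕ) :
    Measurable (fun x : ℝ => Real.log (1 + x) * Real.exp (-q * x) * x ^ n) := by
  exact ((Real.measurable_log.comp (measurable_const.add measurable_id)).mul
    ((Real.measurable_exp.comp (measurable_const.mul measurable_id)))).mul (measurable_id.pow_const n)

lemma integrableOn_log_exp_pow (hq : 0 < q) (n : ℕ) :
    IntegrableOn (fun x => Real.log (1 + x) * Real.exp (-q * x) * x ^ n) (Ioi 0) := by
  refine Integrable.mono (integrableOn_exp_pow hq (n + 1) le_rfl)
    (meas_log_exp_pow q n).aestronglyMeasurable ?_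
  filter_upwards [ae_restrict_mem measurableSet_Ioi] with x hx
  have hx0 : (0:ℝ) < x := hx
  have h1 : 0 ≤ Real.log (1 + x) := Real.log_nonneg (by linarith)
  have h2 : Real.log (1 + x) ≤ x := by
    have := Real.log_le_sub_one_of_pos (show (0:ℝ) < 1 + x by linarith)
    linarith
  rw [Real.norm_eq_abs, Real.norm_eq_abs, abs_of_nonneg (by positivity),
    abs_of_nonneg (by positivity)]
  have h3 : Real.log (1 + x) * (Real.exp (-q * x) * x ^ n)
      ≤ x * (Real.exp (-q * x) * x ^ n) :=
    mul_le_mul_of_nonneg_right h2 (by positivity)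
  calc Real.log (1 + x) * Real.exp (-q * x) * x ^ n
      = Real.log (1 + x) * (Real.exp (-q * x) * x ^ n) := by ring
    _ ≤ x * (Real.exp (-q * x) * x ^ n) := h3
    _ = Real.exp (-q * x) * x ^ (n + 1) := by ring

lemma log_integral_scale {lam : ℝ} (hlam : 0 < lam) (μ : ℝ) (n : ℕ) :
    ∫ x in Ioi (0:ℝ), Real.log (1 + x) * Real.exp (-μ * x) * x ^ n
      = lam ^ (n + 1) * F lam n (μ * lam) := by
  have h := integral_comp_mul_left_Ioi
    (fun y => Real.log (1 + y) * Real.exp (-μ * y) * y ^ n) 0 hlam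
  rw [mul_zero] at h
  have e1 : ∀ x : ℝ, Real.log (1 + lam * x) * Real.exp (-μ * (lam * x)) * (lam * x) ^ n
      = lam ^ n * (Real.log (1 + lam * x) * Real.exp (-(μ * lam) * x) * x ^ n) := by
    intro x
    rw [show -μ * (lam * x) = -(μ * lam) * x by ring]
    ring
  simp only [e1] at h
  rw [integral_const_mul] at h
  have : F lam n (μ * lam) = ∫ x in Ioi (0:ℝ),
      Real.log (1 + lam * x) * Real.exp (-(μ * lam) * x) * x ^ n := rfl
  rw [this]
  rw [smul_eq_mul] at h
  have hl : lam ≠ 0 := hlam.ne'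
  rw [pow_succ, mul_comm (lam ^ n) lam, mul_assoc lam (lam ^ n), h, ← mul_assoc,
    mul_inv_cancel₀ hl, one_mul]

end ASC2

namespace ASC3
open ASC ASC2

noncomputable def gp (p : ℝ) (k : ℕ) (α : ℝ) : ℝ :=
  Real.log (1 + α) * Real.exp (-p * α) * α ^ k

noncomputable def W (r s : ℝ) (k : ℕ) (β : ℝ) : ℝ :=
  Real.log (1 + β) * (-Phi r k β) * (Real.exp (-s * β) * β ^ k)

lemma W_eq_sum (r s : ℝ) (k : ℕ) (β : ℝ) :
    W r s k β = ∑ m ∈ Finset.range (k + 1),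
      ((k.factorial : ℝ) / (m.factorial : ℝ)) / r ^ (k + 1 - m) *
        (Real.log (1 + β) * Real.exp (-(r + s) * β) * β ^ (k + m)) := by
  unfold W Phi
  rw [neg_mul, neg_neg, Finset.mul_sum, Finset.mul_sum, Finset.sum_mul]
  apply Finset.sum_congr rfl
  intro m _
  rw [show -(r + s) * β = -r * β + -s * β by ring, Real.exp_add]
  ring

lemma integrableOn_W {r s : ℝ} (hr : 0 < r) (hs : 0 < s) (k : ℕ) :
    IntegrableOn (W r s k) (Ioi 0) := by
  have : W r s k = fun β => ∑ m ∈ Finset.range (k + 1),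
      ((k.factorial : ℝ) / (m.factorial : ℝ)) / r ^ (k + 1 - m) *
        (Real.log (1 + β) * Real.exp (-(r + s) * β) * β ^ (k + m)) :=
    funext (W_eq_sum r s k)
  rw [this]
  exact integrable_finset_sum _ fun m _ =>
    (integrableOn_log_exp_pow (by positivity) (k + m)).const_mul _

lemma integral_W {r s : ℝ} (hr : 0 < r) (hs : 0 < s) (k : ℕ) :
    ∫ β in Ioi (0:ℝ), W r s k β = ∑ m ∈ Finset.range (k + 1),
      ((k.factorial : ℝ) / (m.factorial : ℝ)) / r ^ (k + 1 - m) *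
        ∫ x in Ioi (0:ℝ), Real.log (1 + x) * Real.exp (-(r + s) * x) * x ^ (k + m) := by
  simp only [W_eq_sum]
  rw [integral_finset_sum _ fun m _ =>
    (integrableOn_log_exp_pow (by positivity) (k + m)).const_mul _]
  exact Finset.sum_congr rfl fun m _ => integral_const_mul _ _

end ASC3

namespace ASC3
open ASC ASC2

lemma inner_eq {p q : ℝ} (hp : 0 < p) (hq : 0 < q) (k : ℕ) {β : ℝ} (hβ : β ∈ Ioi (0:ℝ)) :
    ∫ α in Ioi (0:ℝ), max (Real.log (1 + α) - Real.log (1 + β)) 0 *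
        (Real.exp (-p * α) * α ^ k) * (Real.exp (-q * β) * β ^ k)
      = (∫ α in Ioi β, gp p k α) * (Real.exp (-q * β) * β ^ k) - W p q k β := by
  have hβ0 : (0:ℝ) < β := hβ
  have e1 : EqOn
      (fun α => max (Real.log (1 + α) - Real.log (1 + β)) 0 *
        (Real.exp (-p * α) * α ^ k) * (Real.exp (-q * β) * β ^ k))
      ((Ioi β).indicator fun α => (Real.log (1 + α) - Real.log (1 + β)) *
        (Real.exp (-p * α) * α ^ k) * (Real.exp (-q * β) * β ^ k)) (Ioi 0) := by
    intro α hα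
    have hα0 : (0:ℝ) < α := hα
    simp only [indicator_apply, mem_Ioi]
    by_cases hab : β < α
    · rw [if_pos hab]
      have : Real.log (1 + β) ≤ Real.log (1 + α) :=
        Real.log_le_log (by linarith) (by linarith)
      rw [max_eq_left (by linarith : (0:ℝ) ≤ Real.log (1 + α) - Real.log (1 + β))]
    · rw [if_neg hab]
      have hle : α ≤ β := le_of_not_gt hab
      have : Real.log (1 + α) ≤ Real.log (1 + β) :=
        Real.log_le_log (by linarith) (by linarith)
      rw [max_eq_right (by linarith : Real.log (1 + α) - Real.log (1 + β) ≤ (0:ℝ))]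
      ring
  rw [setIntegral_congr_fun measurableSet_Ioi e1, integral_indicator measurableSet_Ioi,
    Measure.restrict_restrict measurableSet_Ioi,
    inter_eq_left.mpr (Ioi_subset_Ioi hβ0.le)]
  have i1 : IntegrableOn (fun α => Real.log (1 + α) * Real.exp (-p * α) * α ^ k *
      (Real.exp (-q * β) * β ^ k)) (Ioi β) :=
    ((integrableOn_log_exp_pow hp k).mono_set (Ioi_subset_Ioi hβ0.le)).mul_const _
  have i2 : IntegrableOn (fun α => Real.log (1 + β) *
      (Real.exp (-p * α) * α ^ k) * (Real.exp (-q * β) * β ^ k)) (Ioi β) := by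
    have := ((integrableOn_exp_pow hp k hβ0.le).const_mul (Real.log (1 + β))).mul_const
      (Real.exp (-q * β) * β ^ k)
    exact this
  have e2 : EqOn (fun α => (Real.log (1 + α) - Real.log (1 + β)) *
        (Real.exp (-p * α) * α ^ k) * (Real.exp (-q * β) * β ^ k))
      (fun α => Real.log (1 + α) * Real.exp (-p * α) * α ^ k *
        (Real.exp (-q * β) * β ^ k)
        - Real.log (1 + β) * (Real.exp (-p * α) * α ^ k) *
          (Real.exp (-q * β) * β ^ k)) (Ioi β) := fun α _ => by ring
  rw [setIntegral_congr_fun measurableSet_Ioi e2, integral_sub i1 i2]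
  congr 1
  · rw [integral_mul_const]
    rfl
  · have e3 : (fun α => Real.log (1 + β) * (Real.exp (-p * α) * α ^ k) *
        (Real.exp (-q * β) * β ^ k))
        = fun α => (Real.log (1 + β) * (Real.exp (-q * β) * β ^ k)) *
          (Real.exp (-p * α) * α ^ k) := by funext α; ring
    rw [e3, integral_const_mul, integral_Ioi_exp_pow hp k hβ0.le]
    unfold W
    ring

end ASC3

namespace ASC3
open ASC ASC2

variable {p q : ℝ}

/-- The uncurried kernel for the Fubini step. -/
noncomputable def H (p q : ℝ) (k : ℕ) (z : ℝ × ℝ) : ℝ :=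
  (Real.exp (-q * z.1) * z.1 ^ k) *
    Set.indicator {w : ℝ × ℝ | w.1 < w.2} (fun w => gp p k w.2) z

lemma meas_gp (p : ℝ) (k : ℕ) : Measurable (gp p k) := meas_log_exp_pow p k

lemma meas_H (p q : ℝ) (k : ℕ) : Measurable (H p q k) :=
  ((Real.measurable_exp.comp (measurable_const.mul measurable_fst)).mul
      (measurable_fst.pow_const k)).mul
    (((meas_gp p k).comp measurable_snd).indicator
      (measurableSet_lt measurable_fst measurable_snd))

lemma gp_bound {x : ℝ} (hx : 0 < x) (p : ℝ) (k : ℕ) :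
    ‖gp p k x‖ ≤ Real.exp (-p * x) * x ^ (k + 1) := by
  have h1 : 0 ≤ Real.log (1 + x) := Real.log_nonneg (by linarith)
  have h2 : Real.log (1 + x) ≤ x := by
    have := Real.log_le_sub_one_of_pos (show (0:ℝ) < 1 + x by linarith)
    linarith
  unfold gp
  rw [Real.norm_eq_abs, abs_of_nonneg (by positivity)]
  calc Real.log (1 + x) * Real.exp (-p * x) * x ^ k
      = Real.log (1 + x) * (Real.exp (-p * x) * x ^ k) := by ring
    _ ≤ x * (Real.exp (-p * x) * x ^ k) :=
        mul_le_mul_of_nonneg_right h2 (by positivity)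
    _ = Real.exp (-p * x) * x ^ (k + 1) := by ring

lemma int_H (hp : 0 < p) (hq : 0 < q) (k : ℕ) :
    Integrable (H p q k)
      ((volume.restrict (Ioi (0:ℝ))).prod (volume.restrict (Ioi (0:ℝ)))) := by
  have hD : Integrable
      (fun z : ℝ × ℝ => (Real.exp (-q * z.1) * z.1 ^ k) *
        (Real.exp (-p * z.2) * z.2 ^ (k + 1)))
      ((volume.restrict (Ioi (0:ℝ))).prod (volume.restrict (Ioi (0:ℝ)))) :=
    Integrable.mul_prod (integrableOn_exp_pow hq k le_rfl)
      (integrableOn_exp_pow hp (k + 1) le_rfl)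
  refine hD.mono' (meas_H p q k).aestronglyMeasurable ?_
  rw [Measure.prod_restrict]
  rw [ae_restrict_iff' (measurableSet_Ioi.prod measurableSet_Ioi)]
  refine ae_of_all _ fun z hz => ?_
  obtain ⟨hz1, hz2⟩ := hz
  have hz1' : (0:ℝ) < z.1 := hz1
  have hz2' : (0:ℝ) < z.2 := hz2
  unfold H
  rw [norm_mul]
  have hb1 : ‖Real.exp (-q * z.1) * z.1 ^ k‖ = Real.exp (-q * z.1) * z.1 ^ k := by
    rw [Real.norm_eq_abs, abs_of_nonneg (by positivity)]
  rw [hb1]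
  refine mul_le_mul_of_nonneg_left ?_ (by positivity)
  calc ‖Set.indicator {w : ℝ × ℝ | w.1 < w.2} (fun w => gp p k w.2) z‖
      ≤ ‖gp p k z.2‖ := norm_indicator_le_norm_self _ _
    _ ≤ Real.exp (-p * z.2) * z.2 ^ (k + 1) := gp_bound hz2' p k

lemma H_slice_beta (k : ℕ) {β : ℝ} (hβ : (0:ℝ) < β) :
    ∫ α in Ioi (0:ℝ), H p q k (β, α)
      = (Real.exp (-q * β) * β ^ k) * ∫ α in Ioi β, gp p k α := by
  have e : (fun α => H p q k (β, α))
      = fun α => (Real.exp (-q * β) * β ^ k) * (Ioi β).indicator (gp p k) α := by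
    funext α
    unfold H
    by_cases h : β < α
    · simp [indicator_apply, h, mem_Ioi, mem_setOf_eq]
    · simp [indicator_apply, h, mem_Ioi, mem_setOf_eq]
  rw [e, integral_const_mul, integral_indicator measurableSet_Ioi,
    Measure.restrict_restrict measurableSet_Ioi,
    inter_eq_left.mpr (Ioi_subset_Ioi hβ.le)]

lemma part1 (hp : 0 < p) (hq : 0 < q) (k : ℕ) :
    ∫ β in Ioi (0:ℝ), (∫ α in Ioi β, gp p k α) * (Real.exp (-q * β) * β ^ k)
      = (k.factorial : ℝ) / q ^ (k + 1) * (∫ x in Ioi (0:ℝ), gp p k x)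
        - ∫ α in Ioi (0:ℝ), W q p k α := by
  have step1 : ∫ β in Ioi (0:ℝ), (∫ α in Ioi β, gp p k α) * (Real.exp (-q * β) * β ^ k)
      = ∫ β in Ioi (0:ℝ), ∫ α in Ioi (0:ℝ), H p q k (β, α) := by
    refine setIntegral_congr_fun measurableSet_Ioi fun β hβ => ?_
    rw [H_slice_beta k hβ]
    ring
  have step2 : ∫ β in Ioi (0:ℝ), ∫ α in Ioi (0:ℝ), H p q k (β, α)
      = ∫ α in Ioi (0:ℝ), ∫ β in Ioi (0:ℝ), H p q k (β, α) :=
    integral_integral_swap (int_H hp hq k)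
  have step3 : ∫ α in Ioi (0:ℝ), (∫ β in Ioi (0:ℝ), H p q k (β, α))
      = ∫ α in Ioi (0:ℝ), ((k.factorial : ℝ) / q ^ (k + 1) * gp p k α - W q p k α) := by
    refine setIntegral_congr_fun measurableSet_Ioi fun α hα => ?_
    have hα0 : (0:ℝ) < α := hα
    have e : (fun β => H p q k (β, α))
        = fun β => (Iio α).indicator
            (fun β => (Real.exp (-q * β) * β ^ k) * gp p k α) β := by
      funext β
      unfold H
      by_cases h : β < α
      · simp [indicator_apply, h, mem_Iio, mem_setOf_eq]
      · simp [indicator_apply, h, mem_Iio, mem_setOf_eq]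
    rw [e, integral_indicator measurableSet_Iio,
      Measure.restrict_restrict measurableSet_Iio, Iio_inter_Ioi,
      integral_mul_const, ← integral_Ioc_eq_integral_Ioo,
      integral_Ioc_exp_pow hq k hα0.le, Phi_zero hq.ne']
    unfold W gp
    ring
  rw [step1, step2, step3]
  have i1 : IntegrableOn (fun α => (k.factorial : ℝ) / q ^ (k + 1) * gp p k α)
      (Ioi (0:ℝ)) := (integrableOn_log_exp_pow hp k).const_mul _
  rw [integral_sub i1 (integrableOn_W hq hp k), integral_const_mul]

lemma keyJ (hp : 0 < p) (hq : 0 < q) (k : ℕ) :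
    ∫ β in Ioi (0:ℝ), ∫ α in Ioi (0:ℝ),
        max (Real.log (1 + α) - Real.log (1 + β)) 0 *
          (Real.exp (-p * α) * α ^ k) * (Real.exp (-q * β) * β ^ k)
      = (k.factorial : ℝ) / q ^ (k + 1) *
          (∫ x in Ioi (0:ℝ), Real.log (1 + x) * Real.exp (-p * x) * x ^ k)
        - (∑ m ∈ Finset.range (k + 1), ((k.factorial : ℝ) / (m.factorial : ℝ)) / q ^ (k + 1 - m) *
            ∫ x in Ioi (0:ℝ), Real.log (1 + x) * Real.exp (-(p + q) * x) * x ^ (k + m))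
        - (∑ m ∈ Finset.range (k + 1), ((k.factorial : ℝ) / (m.factorial : ℝ)) / p ^ (k + 1 - m) *
            ∫ x in Ioi (0:ℝ), Real.log (1 + x) * Real.exp (-(p + q) * x) * x ^ (k + m)) := by
  have hX : Integrable (fun β => ∫ α in Ioi (0:ℝ), H p q k (β, α))
      (volume.restrict (Ioi (0:ℝ))) := (int_H hp hq k).integral_prod_left
  have hXX : IntegrableOn (fun β => (∫ α in Ioi β, gp p k α) * (Real.exp (-q * β) * β ^ k))
      (Ioi (0:ℝ)) := by
    refine hX.congr ?_
    rw [Filter.EventuallyEq, ae_restrict_iff' measurableSet_Ioi]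
    refine ae_of_all _ fun β hβ => ?_
    rw [H_slice_beta k hβ]
    ring
  have step0 : ∫ β in Ioi (0:ℝ), ∫ α in Ioi (0:ℝ),
      max (Real.log (1 + α) - Real.log (1 + β)) 0 *
        (Real.exp (-p * α) * α ^ k) * (Real.exp (-q * β) * β ^ k)
      = ∫ β in Ioi (0:ℝ),
          ((∫ α in Ioi β, gp p k α) * (Real.exp (-q * β) * β ^ k) - W p q k β) :=
    setIntegral_congr_fun measurableSet_Ioi fun β hβ => inner_eq hp hq k hβ
  rw [step0, integral_sub hXX (integrableOn_W hp hq k), part1 hp hq k,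
    integral_W hq hp k, integral_W hp hq k, add_comm q p]
  unfold gp
  rfl

end ASC3

namespace ASC4
open ASC ASC2 ASC3

lemma perk_t {lam1 lam2 t : ℝ} (hlam1 : 0 < lam1) (hlam2 : 0 < lam2) (ht : 0 < t) (k : ℕ) :
    ∫ β in Ioi (0:ℝ), ∫ α in Ioi (0:ℝ),
        max (Real.log (1 + α) - Real.log (1 + β)) 0 *
          ((1 / (lam1 * lam2)) * Real.exp (-(α / lam1 + β / lam2) / t) *
            (α / lam1) ^ k * (β / lam2) ^ k)
      = (k.factorial : ℝ) * t ^ (k + 1) * F lam1 k (1 / t) -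
          (k.factorial : ℝ) * ∑ m ∈ Finset.range (k + 1),
            ((lam1 / lam2) ^ m / (m.factorial : ℝ)) * t ^ (k + 1 - m) *
              F lam1 (k + m) ((1 + lam1 / lam2) / t) -
          (k.factorial : ℝ) * ∑ m ∈ Finset.range (k + 1),
            ((lam2 / lam1) ^ m / (m.factorial : ℝ)) * t ^ (k + 1 - m) *
              F lam2 (k + m) ((1 + lam2 / lam1) / t) := by
  set p := 1 / (lam1 * t) with hpdef
  set q := 1 / (lam2 * t) with hqdef
  have hp : 0 < p := by rw [hpdef]; positivity
  have hq : 0 < q := by rw [hqdef]; positivity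
  have hl1 : lam1 ≠ 0 := hlam1.ne'
  have hl2 : lam2 ≠ 0 := hlam2.ne'
  have ht' : t ≠ 0 := ht.ne'
  have harg1 : p * lam1 = 1 / t := by rw [hpdef]; field_simp
  have harg2 : (p + q) * lam1 = (1 + lam1 / lam2) / t := by
    rw [hpdef, hqdef]; field_simp
  have harg3 : (p + q) * lam2 = (1 + lam2 / lam1) / t := by
    rw [hpdef, hqdef]; field_simp; ring
  have e : ∀ β α : ℝ, max (Real.log (1 + α) - Real.log (1 + β)) 0 *
        ((1 / (lam1 * lam2)) * Real.exp (-(α / lam1 + β / lam2) / t) *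
          (α / lam1) ^ k * (β / lam2) ^ k)
      = (1 / (lam1 ^ (k + 1) * lam2 ^ (k + 1))) *
          (max (Real.log (1 + α) - Real.log (1 + β)) 0 *
            (Real.exp (-p * α) * α ^ k) * (Real.exp (-q * β) * β ^ k)) := by
    intro β α
    rw [show -(α / lam1 + β / lam2) / t = -p * α + -q * β by
      rw [hpdef, hqdef]; field_simp; ring, Real.exp_add, div_pow, div_pow]
    rw [pow_succ, pow_succ]
    field_simp
  simp only [e]
  simp only [integral_const_mul]
  rw [keyJ hp hq k]
  rw [log_integral_scale hlam1 p k, harg1]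
  rw [show (∑ m ∈ Finset.range (k + 1), ((k.factorial : ℝ) / (m.factorial : ℝ)) / q ^ (k + 1 - m) *
        ∫ x in Ioi (0:ℝ), Real.log (1 + x) * Real.exp (-(p + q) * x) * x ^ (k + m))
      = ∑ m ∈ Finset.range (k + 1), ((k.factorial : ℝ) / (m.factorial : ℝ)) / q ^ (k + 1 - m) *
          (lam1 ^ (k + m + 1) * F lam1 (k + m) ((1 + lam1 / lam2) / t)) from
    Finset.sum_congr rfl fun m _ => by
      rw [log_integral_scale hlam1 (p + q) (k + m), harg2]]
  rw [show (∑ m ∈ Finset.range (k + 1), ((k.factorial : ℝ) / (m.factorial : ℝ)) / p ^ (k + 1 - m) *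
        ∫ x in Ioi (0:ℝ), Real.log (1 + x) * Real.exp (-(p + q) * x) * x ^ (k + m))
      = ∑ m ∈ Finset.range (k + 1), ((k.factorial : ℝ) / (m.factorial : ℝ)) / p ^ (k + 1 - m) *
          (lam2 ^ (k + m + 1) * F lam2 (k + m) ((1 + lam2 / lam1) / t)) from
    Finset.sum_congr rfl fun m _ => by
      rw [log_integral_scale hlam2 (p + q) (k + m), harg3]]
  rw [mul_sub, mul_sub, Finset.mul_sum, Finset.mul_sum, Finset.mul_sum, Finset.mul_sum]
  congr 1
  congr 1
  · -- main term
    rw [hqdef, div_pow, one_pow]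
    rw [div_div_eq_mul_div, div_one, mul_pow]
    have h1 : lam1 ^ (k + 1) ≠ 0 := by positivity
    have h2 : lam2 ^ (k + 1) ≠ 0 := by positivity
    field_simp
  · -- first sum
    refine Finset.sum_congr rfl fun m hm => ?_
    have hm' : m ≤ k + 1 := (Finset.mem_range.mp hm).le
    rw [pow_sub₀ q hq.ne' hm', pow_sub₀ t ht' hm', hqdef]
    have hfac : (m.factorial : ℝ) ≠ 0 := Nat.cast_ne_zero.mpr m.factorial_ne_zero
    simp only [one_div, div_pow, inv_pow, mul_pow, pow_add]
    field_simp
  · -- second sum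
    refine Finset.sum_congr rfl fun m hm => ?_
    have hm' : m ≤ k + 1 := (Finset.mem_range.mp hm).le
    rw [pow_sub₀ p hp.ne' hm', pow_sub₀ t ht' hm', hpdef]
    have hfac : (m.factorial : ℝ) ≠ 0 := Nat.cast_ne_zero.mpr m.factorial_ne_zero
    simp only [one_div, div_pow, inv_pow, mul_pow, pow_add]
    field_simp


lemma perk {lam1 lam2 ρ : ℝ} (hlam1 : 0 < lam1) (hlam2 : 0 < lam2) (hρ1 : ρ < 1) (k : ℕ) :
    ∫ β in Ioi (0:ℝ), ∫ α in Ioi (0:ℝ),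
        max (Real.log (1 + α) - Real.log (1 + β)) 0 *
          ((1 / (lam1 * lam2)) * Real.exp (-(α / lam1 + β / lam2) / (1 - ρ)) *
            (α / lam1) ^ k * (β / lam2) ^ k)
      = (k.factorial : ℝ) * (1 - ρ) ^ (k + 1) * F lam1 k (1 / (1 - ρ)) -
          (k.factorial : ℝ) * ∑ m ∈ Finset.range (k + 1),
            ((lam1 / lam2) ^ m / (m.factorial : ℝ)) * (1 - ρ) ^ (k + 1 - m) *
              F lam1 (k + m) ((1 + lam1 / lam2) / (1 - ρ)) -
          (k.factorial : ℝ) * ∑ m ∈ Finset.range (k + 1),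
            ((lam2 / lam1) ^ m / (m.factorial : ℝ)) * (1 - ρ) ^ (k + 1 - m) *
              F lam2 (k + m) ((1 + lam2 / lam1) / (1 - ρ)) :=
  perk_t hlam1 hlam2 (by linarith) k

end ASC4

namespace ASC5
open ASC ASC2 ASC3 ASC4

noncomputable def cc (ρ t : ℝ) (k : ℕ) : ℝ :=
  ρ ^ k / ((k.factorial : ℝ) ^ 2 * t ^ (2 * k + 1))

noncomputable def SS (lam1 lam2 ρ t : ℝ) (k : ℕ) (α β : ℝ) : ℝ :=
  cc ρ t k * (1 / (lam1 * lam2)) * Real.exp (-(α / lam1 + β / lam2) / t) *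
    (α / lam1) ^ k * (β / lam2) ^ k

noncomputable def DD (lam1 lam2 ρ t : ℝ) (k : ℕ) : ℝ :=
  cc ρ t k / (lam1 ^ (k + 1) * lam2 ^ (k + 1))

noncomputable def BB (q : ℝ) (k : ℕ) (β : ℝ) : ℝ := Real.exp (-q * β) * β ^ k

lemma SS_decomp {lam1 lam2 t : ℝ} (ρ : ℝ) (hl1 : lam1 ≠ 0) (hl2 : lam2 ≠ 0)
    (ht : t ≠ 0) (k : ℕ) (α β : ℝ) :
    SS lam1 lam2 ρ t k α β
      = DD lam1 lam2 ρ t k * (Real.exp (-(1 / (lam1 * t)) * α) * α ^ k) *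
          BB (1 / (lam2 * t)) k β := by
  unfold SS DD BB
  rw [show -(α / lam1 + β / lam2) / t = -(1 / (lam1 * t)) * α + -(1 / (lam2 * t)) * β by
    field_simp; ring, Real.exp_add, div_pow, div_pow, pow_succ, pow_succ]
  field_simp

lemma cc_nonneg {ρ t : ℝ} (hρ : 0 ≤ ρ) (ht : 0 < t) (k : ℕ) : 0 ≤ cc ρ t k := by
  unfold cc
  have h1 : 0 ≤ ρ ^ k := pow_nonneg hρ k
  positivity

lemma DD_nonneg {lam1 lam2 ρ t : ℝ} (hl1 : 0 < lam1) (hl2 : 0 < lam2)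
    (hρ : 0 ≤ ρ) (ht : 0 < t) (k : ℕ) : 0 ≤ DD lam1 lam2 ρ t k := by
  unfold DD
  have := cc_nonneg hρ ht k
  positivity

lemma DD_RA_B {lam1 lam2 ρ t : ℝ} (hl1 : lam1 ≠ 0) (hl2 : lam2 ≠ 0) (ht : t ≠ 0)
    (k : ℕ) (β : ℝ) :
    DD lam1 lam2 ρ t k * (((k + 1).factorial : ℝ) * (lam1 * t) ^ (k + 2)) *
        BB (1 / (lam2 * t)) k β
      = (lam1 * t * Real.exp (-(1 / (lam2 * t)) * β) / lam2) *
          (((k : ℝ) + 1) * (ρ * β / (lam2 * t)) ^ k / (k.factorial : ℝ)) := by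
  unfold DD BB cc
  rw [Nat.factorial_succ]
  have hfac : (k.factorial : ℝ) ≠ 0 := Nat.cast_ne_zero.mpr k.factorial_ne_zero
  push_cast
  rw [div_pow, mul_pow, mul_pow]
  rw [show 2 * k + 1 = k + (k + 1) by ring, pow_add, pow_succ, pow_succ]
  field_simp
  ring

lemma DD_RA_RB {lam1 lam2 ρ t : ℝ} (hl1 : lam1 ≠ 0) (hl2 : lam2 ≠ 0) (ht : t ≠ 0)
    (k : ℕ) :
    DD lam1 lam2 ρ t k * (((k + 1).factorial : ℝ) * (lam1 * t) ^ (k + 2)) *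
        ((k.factorial : ℝ) * (lam2 * t) ^ (k + 1))
      = lam1 * t ^ 2 * (((k : ℝ) + 1) * ρ ^ k) := by
  unfold DD cc
  rw [Nat.factorial_succ]
  have hfac : (k.factorial : ℝ) ≠ 0 := Nat.cast_ne_zero.mpr k.factorial_ne_zero
  push_cast
  rw [mul_pow, mul_pow]
  rw [show 2 * k + 1 = k + (k + 1) by ring, pow_add, pow_succ, pow_succ, pow_succ]
  field_simp
  ring

lemma summable_aux1 {x : ℝ} (hx : 0 ≤ x) (C : ℝ) :
    Summable (fun k : ℕ => C * (((k : ℝ) + 1) * x ^ k / (k.factorial : ℝ))) := by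
  refine Summable.mul_left C ?_
  refine Summable.of_nonneg_of_le (fun k => by positivity) (fun k => ?_)
    (Real.summable_pow_div_factorial (2 * x))
  rw [mul_pow]
  have h1 : ((k : ℝ) + 1) ≤ 2 ^ k := by
    have := @Nat.lt_two_pow_self k
    exact_mod_cast Nat.succ_le_of_lt this
  gcongr

lemma summable_aux2 {ρ : ℝ} (hρ0 : 0 ≤ ρ) (hρ1 : ρ < 1) (C : ℝ) :
    Summable (fun k : ℕ => C * (((k : ℝ) + 1) * ρ ^ k)) := by
  refine Summable.mul_left C ?_
  have h1 : Summable (fun k : ℕ => (k : ℝ) ^ 1 * ρ ^ k) :=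
    summable_pow_mul_geometric_of_norm_lt_one 1
      (by rw [Real.norm_eq_abs, abs_of_nonneg hρ0]; exact hρ1)
  have h2 : Summable (fun k : ℕ => ρ ^ k) :=
    summable_geometric_of_lt_one hρ0 hρ1
  refine (h1.add h2).congr fun k => ?_
  push_cast
  ring

end ASC5

namespace ASC6
open ASC ASC2 ASC3 ASC4 ASC5

noncomputable def gg (lam1 lam2 ρ t : ℝ) (k : ℕ) (β α : ℝ) : ℝ :=
  max (Real.log (1 + α) - Real.log (1 + β)) 0 * SS lam1 lam2 ρ t k α β

variable {lam1 lam2 ρ t : ℝ}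

lemma meas_gg_alpha (k : ℕ) (β : ℝ) :
    Measurable (fun α => gg lam1 lam2 ρ t k β α) := by
  unfold gg SS
  refine Measurable.mul ?_ ?_
  · exact ((Real.measurable_log.comp (measurable_const.add measurable_id)).sub_const
      _).max measurable_const
  · refine Measurable.mul (Measurable.mul (Measurable.mul measurable_const ?_)
      ((measurable_id.div_const lam1).pow_const k)) measurable_const
    exact Real.measurable_exp.comp
      (((measurable_id.div_const lam1).add_const (β / lam2)).neg.div_const t)

lemma meas_gg_prod (k : ℕ) :
    Measurable (fun z : ℝ × ℝ => gg lam1 lam2 ρ t k z.1 z.2) := by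
  unfold gg SS
  refine Measurable.mul ?_ ?_
  · exact ((Real.measurable_log.comp (measurable_const.add measurable_snd)).sub
      (Real.measurable_log.comp (measurable_const.add measurable_fst))).max
      measurable_const
  · refine Measurable.mul (Measurable.mul (Measurable.mul measurable_const ?_)
      ((measurable_snd.div_const lam1).pow_const k))
      ((measurable_fst.div_const lam2).pow_const k)
    exact Real.measurable_exp.comp
      (((measurable_snd.div_const lam1).add (measurable_fst.div_const lam2)).neg.div_const t)

section hyps
variable (hl1 : 0 < lam1) (hl2 : 0 < lam2) (hρ0 : 0 ≤ ρ) (ht : 0 < t)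
include hl1 hl2 hρ0 ht

lemma SS_nonneg (k : ℕ) {α β : ℝ} (hα : 0 ≤ α) (hβ : 0 ≤ β) :
    0 ≤ SS lam1 lam2 ρ t k α β := by
  rw [SS_decomp ρ hl1.ne' hl2.ne' ht.ne' k α β]
  unfold BB
  have h1 := DD_nonneg hl1 hl2 hρ0 ht k
  positivity

lemma gg_nonneg (k : ℕ) {α β : ℝ} (hα : 0 ≤ α) (hβ : 0 ≤ β) :
    0 ≤ gg lam1 lam2 ρ t k β α :=
  mul_nonneg (le_max_right _ _) (SS_nonneg hl1 hl2 hρ0 ht k hα hβ)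

lemma gg_le (k : ℕ) {α β : ℝ} (hα : 0 < α) (hβ : 0 ≤ β) :
    gg lam1 lam2 ρ t k β α
      ≤ DD lam1 lam2 ρ t k * BB (1 / (lam2 * t)) k β *
          (Real.exp (-(1 / (lam1 * t)) * α) * α ^ (k + 1)) := by
  have hMle : max (Real.log (1 + α) - Real.log (1 + β)) 0 ≤ α := by
    apply max_le
    · have h1 : Real.log (1 + α) ≤ α := by
        have := Real.log_le_sub_one_of_pos (show (0:ℝ) < 1 + α by linarith)
        linarith
      have h2 : 0 ≤ Real.log (1 + β) := Real.log_nonneg (by linarith)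
      linarith
    · exact hα.le
  have hS := SS_nonneg hl1 hl2 hρ0 ht k hα.le hβ
  calc gg lam1 lam2 ρ t k β α ≤ α * SS lam1 lam2 ρ t k α β :=
        mul_le_mul_of_nonneg_right hMle hS
    _ = DD lam1 lam2 ρ t k * BB (1 / (lam2 * t)) k β *
          (Real.exp (-(1 / (lam1 * t)) * α) * α ^ (k + 1)) := by
        rw [SS_decomp ρ hl1.ne' hl2.ne' ht.ne' k α β]
        unfold BB
        ring

lemma intg_bound (k : ℕ) (β : ℝ) :
    IntegrableOn (fun α => DD lam1 lam2 ρ t k * BB (1 / (lam2 * t)) k β *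
      (Real.exp (-(1 / (lam1 * t)) * α) * α ^ (k + 1))) (Ioi (0:ℝ)) := by
  have hp : 0 < 1 / (lam1 * t) := by positivity
  exact (integrableOn_exp_pow hp (k + 1) le_rfl).const_mul _

lemma integrable_gg_alpha (k : ℕ) {β : ℝ} (hβ : 0 ≤ β) :
    IntegrableOn (fun α => gg lam1 lam2 ρ t k β α) (Ioi (0:ℝ)) := by
  refine (intg_bound hl1 hl2 hρ0 ht k β).mono'
    (meas_gg_alpha k β).aestronglyMeasurable ?_
  rw [ae_restrict_iff' measurableSet_Ioi]
  refine ae_of_all _ fun α hα => ?_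
  rw [Real.norm_eq_abs, abs_of_nonneg (gg_nonneg hl1 hl2 hρ0 ht k (le_of_lt hα) hβ)]
  exact gg_le hl1 hl2 hρ0 ht k hα hβ

lemma hRA (k : ℕ) :
    ∫ α in Ioi (0:ℝ), Real.exp (-(1 / (lam1 * t)) * α) * α ^ (k + 1)
      = ((k + 1).factorial : ℝ) * (lam1 * t) ^ (k + 2) := by
  have hp : 0 < 1 / (lam1 * t) := by positivity
  rw [integral_Ioi_exp_pow hp (k + 1) le_rfl, Phi_zero hp.ne', neg_neg,
    show k + 1 + 1 = k + 2 by ring, one_div, inv_pow]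
  field_simp

lemma hRB (k : ℕ) :
    ∫ β in Ioi (0:ℝ), BB (1 / (lam2 * t)) k β
      = (k.factorial : ℝ) * (lam2 * t) ^ (k + 1) := by
  have hq : 0 < 1 / (lam2 * t) := by positivity
  unfold BB
  rw [integral_Ioi_exp_pow hq k le_rfl, Phi_zero hq.ne', neg_neg, one_div, inv_pow]
  field_simp

lemma integral_bound_value (k : ℕ) (β : ℝ) :
    ∫ α in Ioi (0:ℝ), DD lam1 lam2 ρ t k * BB (1 / (lam2 * t)) k β *
        (Real.exp (-(1 / (lam1 * t)) * α) * α ^ (k + 1))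
      = DD lam1 lam2 ρ t k * (((k + 1).factorial : ℝ) * (lam1 * t) ^ (k + 2)) *
          BB (1 / (lam2 * t)) k β := by
  rw [integral_const_mul, hRA hl1 hl2 hρ0 ht k]
  ring

lemma summable_rowbound {β : ℝ} (hβ : 0 ≤ β) :
    Summable (fun k : ℕ => DD lam1 lam2 ρ t k *
      (((k + 1).factorial : ℝ) * (lam1 * t) ^ (k + 2)) * BB (1 / (lam2 * t)) k β) := by
  have he : (fun k : ℕ => DD lam1 lam2 ρ t k *
      (((k + 1).factorial : ℝ) * (lam1 * t) ^ (k + 2)) * BB (1 / (lam2 * t)) k β)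
      = fun k : ℕ => (lam1 * t * Real.exp (-(1 / (lam2 * t)) * β) / lam2) *
          (((k : ℝ) + 1) * (ρ * β / (lam2 * t)) ^ k / (k.factorial : ℝ)) :=
    funext fun k => DD_RA_B hl1.ne' hl2.ne' ht.ne' k β
  rw [he]
  exact summable_aux1 (by positivity) _

lemma rowbound_nonneg (k : ℕ) {β : ℝ} (hβ : 0 ≤ β) :
    0 ≤ DD lam1 lam2 ρ t k * (((k + 1).factorial : ℝ) * (lam1 * t) ^ (k + 2)) *
      BB (1 / (lam2 * t)) k β := by
  have h1 := DD_nonneg hl1 hl2 hρ0 ht k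
  unfold BB
  positivity

end hyps
end ASC6

namespace ASC6
open ASC ASC2 ASC3 ASC4 ASC5

variable {lam1 lam2 ρ t : ℝ}

section hyps2
variable (hl1 : 0 < lam1) (hl2 : 0 < lam2) (hρ0 : 0 ≤ ρ) (ht : 0 < t)
include hl1 hl2 hρ0 ht

lemma inner_swap {β : ℝ} (hβ : β ∈ Ioi (0:ℝ)) :
    ∫ α in Ioi (0:ℝ), ∑' k : ℕ, gg lam1 lam2 ρ t k β α
      = ∑' k : ℕ, ∫ α in Ioi (0:ℝ), gg lam1 lam2 ρ t k β α := by
  have hβ0 : (0:ℝ) ≤ β := le_of_lt hβ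
  refine integral_tsum (fun k => (meas_gg_alpha k β).aestronglyMeasurable) ?_
  have key : ∀ k : ℕ, ∫⁻ α, ‖gg lam1 lam2 ρ t k β α‖₊ ∂(volume.restrict (Ioi 0))
      ≤ ENNReal.ofReal (DD lam1 lam2 ρ t k *
          (((k + 1).factorial : ℝ) * (lam1 * t) ^ (k + 2)) * BB (1 / (lam2 * t)) k β) := by
    intro k
    have step1 : ∫⁻ α, ‖gg lam1 lam2 ρ t k β α‖₊ ∂(volume.restrict (Ioi 0))
        ≤ ∫⁻ α, ENNReal.ofReal (DD lam1 lam2 ρ t k * BB (1 / (lam2 * t)) k β *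
            (Real.exp (-(1 / (lam1 * t)) * α) * α ^ (k + 1))) ∂(volume.restrict (Ioi 0)) := by
      refine lintegral_mono_ae ?_
      rw [ae_restrict_iff' measurableSet_Ioi]
      refine ae_of_all _ fun α hα => ?_
      have hgnn := gg_nonneg hl1 hl2 hρ0 ht k (le_of_lt hα) hβ0
      exact le_trans (le_of_eq (Real.enorm_eq_ofReal hgnn))
        (ENNReal.ofReal_le_ofReal (gg_le hl1 hl2 hρ0 ht k hα hβ0))
    have step2 : ∫⁻ α, ENNReal.ofReal (DD lam1 lam2 ρ t k * BB (1 / (lam2 * t)) k β *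
          (Real.exp (-(1 / (lam1 * t)) * α) * α ^ (k + 1))) ∂(volume.restrict (Ioi 0))
        = ENNReal.ofReal (∫ α in Ioi (0:ℝ), DD lam1 lam2 ρ t k * BB (1 / (lam2 * t)) k β *
            (Real.exp (-(1 / (lam1 * t)) * α) * α ^ (k + 1))) := by
      refine (ofReal_integral_eq_lintegral_ofReal (intg_bound hl1 hl2 hρ0 ht k β) ?_).symm
      rw [Filter.EventuallyLE, ae_restrict_iff' measurableSet_Ioi]
      refine ae_of_all _ fun α hα => ?_
      have h1 := DD_nonneg hl1 hl2 hρ0 ht k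
      have h2 : 0 ≤ BB (1 / (lam2 * t)) k β := by unfold BB; positivity
      have hα0 : (0:ℝ) < α := hα
      simp only [Pi.zero_apply]
      positivity
    refine le_trans step1 ?_
    rw [step2, integral_bound_value hl1 hl2 hρ0 ht k β]
  refine ne_top_of_le_ne_top (b := ENNReal.ofReal (∑' k : ℕ, DD lam1 lam2 ρ t k *
      (((k + 1).factorial : ℝ) * (lam1 * t) ^ (k + 2)) * BB (1 / (lam2 * t)) k β))
    ENNReal.ofReal_ne_top (le_trans (ENNReal.tsum_le_tsum key) (le_of_eq ?_))
  exact (ENNReal.ofReal_tsum_of_nonneg (fun k => rowbound_nonneg hl1 hl2 hρ0 ht k hβ0)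
        (summable_rowbound hl1 hl2 hρ0 ht hβ0)).symm

lemma integrable_gg_prod (k : ℕ) :
    Integrable (fun z : ℝ × ℝ => gg lam1 lam2 ρ t k z.1 z.2)
      ((volume.restrict (Ioi (0:ℝ))).prod (volume.restrict (Ioi (0:ℝ)))) := by
  have hq : 0 < 1 / (lam2 * t) := by positivity
  have hp : 0 < 1 / (lam1 * t) := by positivity
  have hf : Integrable (fun β => DD lam1 lam2 ρ t k * BB (1 / (lam2 * t)) k β)
      (volume.restrict (Ioi (0:ℝ))) := by
    have := (integrableOn_exp_pow hq k le_rfl).const_mul (DD lam1 lam2 ρ t k)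
    exact this
  have hg : Integrable (fun α : ℝ => Real.exp (-(1 / (lam1 * t)) * α) * α ^ (k + 1))
      (volume.restrict (Ioi (0:ℝ))) := integrableOn_exp_pow hp (k + 1) le_rfl
  refine (hf.mul_prod hg).mono' (meas_gg_prod k).aestronglyMeasurable ?_
  rw [Measure.prod_restrict, ae_restrict_iff' (measurableSet_Ioi.prod measurableSet_Ioi)]
  refine ae_of_all _ fun z hz => ?_
  obtain ⟨hz1, hz2⟩ := hz
  have hz1' : (0:ℝ) < z.1 := hz1
  have hz2' : (0:ℝ) < z.2 := hz2
  rw [Real.norm_eq_abs, abs_of_nonneg (gg_nonneg hl1 hl2 hρ0 ht k hz2'.le hz1'.le)]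
  calc gg lam1 lam2 ρ t k z.1 z.2
      ≤ DD lam1 lam2 ρ t k * BB (1 / (lam2 * t)) k z.1 *
          (Real.exp (-(1 / (lam1 * t)) * z.2) * z.2 ^ (k + 1)) :=
        gg_le hl1 hl2 hρ0 ht k hz2' hz1'.le
    _ = _ := rfl

lemma integral_gg_alpha_le (k : ℕ) {β : ℝ} (hβ : (0:ℝ) < β) :
    ∫ α in Ioi (0:ℝ), gg lam1 lam2 ρ t k β α
      ≤ DD lam1 lam2 ρ t k * (((k + 1).factorial : ℝ) * (lam1 * t) ^ (k + 2)) *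
          BB (1 / (lam2 * t)) k β := by
  rw [← integral_bound_value hl1 hl2 hρ0 ht k β]
  refine setIntegral_mono_on (integrable_gg_alpha hl1 hl2 hρ0 ht k hβ.le)
    (intg_bound hl1 hl2 hρ0 ht k β) measurableSet_Ioi fun α hα => ?_
  exact gg_le hl1 hl2 hρ0 ht k hα hβ.le

lemma outer_swap (hρ1 : ρ < 1) :
    ∫ β in Ioi (0:ℝ), ∑' k : ℕ, ∫ α in Ioi (0:ℝ), gg lam1 lam2 ρ t k β α
      = ∑' k : ℕ, ∫ β in Ioi (0:ℝ), ∫ α in Ioi (0:ℝ), gg lam1 lam2 ρ t k β α := by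
  have hq : 0 < 1 / (lam2 * t) := by positivity
  refine integral_tsum
    (fun k => ((integrable_gg_prod hl1 hl2 hρ0 ht k).integral_prod_left).aestronglyMeasurable)
    ?_
  have hrowint : ∀ k : ℕ, IntegrableOn (fun β => DD lam1 lam2 ρ t k *
      (((k + 1).factorial : ℝ) * (lam1 * t) ^ (k + 2)) * BB (1 / (lam2 * t)) k β)
      (Ioi (0:ℝ)) := fun k => (integrableOn_exp_pow hq k le_rfl).const_mul _
  have key : ∀ k : ℕ, ∫⁻ β, ‖∫ α in Ioi (0:ℝ), gg lam1 lam2 ρ t k β α‖₊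
      ∂(volume.restrict (Ioi 0))
      ≤ ENNReal.ofReal (lam1 * t ^ 2 * (((k : ℝ) + 1) * ρ ^ k)) := by
    intro k
    have step1 : ∫⁻ β, ‖∫ α in Ioi (0:ℝ), gg lam1 lam2 ρ t k β α‖₊
        ∂(volume.restrict (Ioi 0))
        ≤ ∫⁻ β, ENNReal.ofReal (DD lam1 lam2 ρ t k *
            (((k + 1).factorial : ℝ) * (lam1 * t) ^ (k + 2)) * BB (1 / (lam2 * t)) k β)
          ∂(volume.restrict (Ioi 0)) := by
      refine lintegral_mono_ae ?_
      rw [ae_restrict_iff' measurableSet_Ioi]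
      refine ae_of_all _ fun β hβ => ?_
      have hβ0 : (0:ℝ) < β := hβ
      have hnn : 0 ≤ ∫ α in Ioi (0:ℝ), gg lam1 lam2 ρ t k β α :=
        setIntegral_nonneg measurableSet_Ioi fun α hα =>
          gg_nonneg hl1 hl2 hρ0 ht k (le_of_lt hα) hβ0.le
      exact le_trans (le_of_eq (Real.enorm_eq_ofReal hnn))
        (ENNReal.ofReal_le_ofReal (integral_gg_alpha_le hl1 hl2 hρ0 ht k hβ0))
    have step2 : ∫⁻ β, ENNReal.ofReal (DD lam1 lam2 ρ t k *
          (((k + 1).factorial : ℝ) * (lam1 * t) ^ (k + 2)) * BB (1 / (lam2 * t)) k β)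
        ∂(volume.restrict (Ioi 0))
        = ENNReal.ofReal (∫ β in Ioi (0:ℝ), DD lam1 lam2 ρ t k *
            (((k + 1).factorial : ℝ) * (lam1 * t) ^ (k + 2)) * BB (1 / (lam2 * t)) k β) := by
      refine (ofReal_integral_eq_lintegral_ofReal (hrowint k) ?_).symm
      rw [Filter.EventuallyLE, ae_restrict_iff' measurableSet_Ioi]
      refine ae_of_all _ fun β hβ => ?_
      simp only [Pi.zero_apply]
      exact rowbound_nonneg hl1 hl2 hρ0 ht k (le_of_lt hβ)
    have step3 : ∫ β in Ioi (0:ℝ), DD lam1 lam2 ρ t k *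
          (((k + 1).factorial : ℝ) * (lam1 * t) ^ (k + 2)) * BB (1 / (lam2 * t)) k β
        = lam1 * t ^ 2 * (((k : ℝ) + 1) * ρ ^ k) := by
      rw [integral_const_mul, hRB hl1 hl2 hρ0 ht k]
      exact DD_RA_RB hl1.ne' hl2.ne' ht.ne' k
    refine le_trans step1 ?_
    rw [step2, step3]
  refine ne_top_of_le_ne_top (b := ENNReal.ofReal (∑' k : ℕ,
      lam1 * t ^ 2 * (((k : ℝ) + 1) * ρ ^ k)))
    ENNReal.ofReal_ne_top (le_trans (ENNReal.tsum_le_tsum key) (le_of_eq ?_))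
  exact (ENNReal.ofReal_tsum_of_nonneg (fun k => by
          have : (0:ℝ) ≤ ρ ^ k := pow_nonneg hρ0 k
          positivity)
        (summable_aux2 hρ0 hρ1 _)).symm

end hyps2

lemma perk_gg (hl1 : 0 < lam1) (hl2 : 0 < lam2) (ht : 0 < t) (k : ℕ) :
    ∫ β in Ioi (0:ℝ), ∫ α in Ioi (0:ℝ), gg lam1 lam2 ρ t k β α
      = cc ρ t k *
        ((k.factorial : ℝ) * t ^ (k + 1) * F lam1 k (1 / t) -
          (k.factorial : ℝ) * ∑ m ∈ Finset.range (k + 1),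
            ((lam1 / lam2) ^ m / (m.factorial : ℝ)) * t ^ (k + 1 - m) *
              F lam1 (k + m) ((1 + lam1 / lam2) / t) -
          (k.factorial : ℝ) * ∑ m ∈ Finset.range (k + 1),
            ((lam2 / lam1) ^ m / (m.factorial : ℝ)) * t ^ (k + 1 - m) *
              F lam2 (k + m) ((1 + lam2 / lam1) / t)) := by
  have e : ∀ β α : ℝ, gg lam1 lam2 ρ t k β α
      = cc ρ t k * (max (Real.log (1 + α) - Real.log (1 + β)) 0 *
          ((1 / (lam1 * lam2)) * Real.exp (-(α / lam1 + β / lam2) / t) *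
            (α / lam1) ^ k * (β / lam2) ^ k)) := by
    intro β α
    unfold gg SS
    ring
  simp only [e]
  simp only [integral_const_mul]
  rw [perk_t hl1 hl2 ht k]

end ASC6


/-- Theorem 1: closed form of the average secrecy capacity
over the correlated Rayleigh fading wiretap channel. -/
theorem average_secrecy_capacity
    (lam1 lam2 ρ : ℝ) (hlam1 : 0 < lam1) (hlam2 : 0 < lam2)
    (hρ0 : 0 ≤ ρ) (hρ1 : ρ < 1) :
    ∫ β in Ioi (0:ℝ), ∫ α in Ioi (0:ℝ),
        max (Real.log (1 + α) - Real.log (1 + β)) 0 *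
          ∑' k : ℕ, (ρ ^ k / ((k.factorial : ℝ) ^ 2 * (1 - ρ) ^ (2 * k + 1))) *
            (1 / (lam1 * lam2)) * Real.exp (-(α / lam1 + β / lam2) / (1 - ρ)) *
            (α / lam1) ^ k * (β / lam2) ^ k =
      ∑' k : ℕ, (ρ ^ k / ((k.factorial : ℝ) ^ 2 * (1 - ρ) ^ (2 * k + 1))) *
        ((k.factorial : ℝ) * (1 - ρ) ^ (k + 1) * F lam1 k (1 / (1 - ρ)) -
          (k.factorial : ℝ) * ∑ m ∈ Finset.range (k + 1),
            ((lam1 / lam2) ^ m / (m.factorial : ℝ)) * (1 - ρ) ^ (k + 1 - m) *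
              F lam1 (k + m) ((1 + lam1 / lam2) / (1 - ρ)) -
          (k.factorial : ℝ) * ∑ m ∈ Finset.range (k + 1),
            ((lam2 / lam1) ^ m / (m.factorial : ℝ)) * (1 - ρ) ^ (k + 1 - m) *
              F lam2 (k + m) ((1 + lam2 / lam1) / (1 - ρ))) := by
  have ht : 0 < 1 - ρ := by linarith
  have step1 : ∫ β in Ioi (0:ℝ), ∫ α in Ioi (0:ℝ),
        max (Real.log (1 + α) - Real.log (1 + β)) 0 *
          ∑' k : ℕ, (ρ ^ k / ((k.factorial : ℝ) ^ 2 * (1 - ρ) ^ (2 * k + 1))) *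
            (1 / (lam1 * lam2)) * Real.exp (-(α / lam1 + β / lam2) / (1 - ρ)) *
            (α / lam1) ^ k * (β / lam2) ^ k
      = ∫ β in Ioi (0:ℝ), ∑' k : ℕ, ∫ α in Ioi (0:ℝ), ASC6.gg lam1 lam2 ρ (1 - ρ) k β α := by
    refine setIntegral_congr_fun measurableSet_Ioi fun β hβ => ?_
    rw [← ASC6.inner_swap hlam1 hlam2 hρ0 ht hβ]
    refine integral_congr_ae (ae_of_all _ fun α => ?_)
    exact (tsum_mul_left (a := max (Real.log (1 + α) - Real.log (1 + β)) 0)).symm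
  rw [step1, ASC6.outer_swap hlam1 hlam2 hρ0 ht hρ1]
  exact tsum_congr fun k => ASC6.perk_gg hlam1 hlam2 ht k
end

section
/- (Independent-channel special case of Theorem 1, recovering [7]) Let λ1, λ2 > 0. For independent exponential SNRs, i.e. joint density f_0(α,β) = (1/(λ1 λ2)) e^{−α/λ1 − β/λ2}, the average secrecy capacity satisfies ∫_0^∞ ∫_0^∞ max(ln(1+α) − ln(1+β), 0) f_0(α,β) dα dβ = e^{1/λ1} E_1(1/λ1) − e^{1/λ1 + 1/λ2} E_1(1/λ1 + 1/λ2). -/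
open MeasureTheory Real Set

open Filter Topology

noncomputable def Etail (a u : ℝ) : ℝ := ∫ t in Ioi u, Real.exp (-a * t) / t

lemma h_contOn (a : ℝ) : ContinuousOn (fun t => Real.exp (-a * t) / t) (Ioi (0:ℝ)) :=
  ContinuousOn.div (by fun_prop) continuousOn_id (fun t ht => ne_of_gt ht)

lemma integrableOn_h {a u : ℝ} (ha : 0 < a) (hu : 0 < u) :
    IntegrableOn (fun t => Real.exp (-a * t) / t) (Ioi u) := by
  have hmeas : AEStronglyMeasurable (fun t => Real.exp (-a * t) / t)
      (volume.restrict (Ioi u)) :=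
    ((h_contOn a).mono (Ioi_subset_Ioi hu.le)).aestronglyMeasurable measurableSet_Ioi
  refine Integrable.mono' ((exp_neg_integrableOn_Ioi u ha).div_const u) hmeas ?_
  filter_upwards [ae_restrict_mem measurableSet_Ioi] with t ht
  have ht0 : (0:ℝ) < t := hu.trans ht
  rw [Real.norm_eq_abs, abs_of_nonneg (div_nonneg (Real.exp_pos _).le ht0.le)]
  exact div_le_div_of_nonneg_left (le_of_lt (Real.exp_pos _)) hu (le_of_lt ht)

lemma integral_exp_neg_mul_Ioi {a c : ℝ} (ha : 0 < a) :
    ∫ x in Ioi c, Real.exp (-a * x) = Real.exp (-a * c) / a := by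
  have hd : ∀ x ∈ Ioi c, HasDerivAt (fun x => -Real.exp (-a * x) / a)
      (Real.exp (-a * x)) x := by
    intro x _
    have h0 : HasDerivAt (fun y : ℝ => -a * y) (-a) x := by
      simpa using (hasDerivAt_id x).const_mul (-a)
    have h2 := h0.exp.neg.div_const a
    refine h2.congr_deriv ?_
    field_simp
  have hcont : ContinuousWithinAt (fun x => -Real.exp (-a * x) / a) (Ici c) c :=
    (Continuous.continuousAt (by fun_prop)).continuousWithinAt
  have htend : Tendsto (fun x => -Real.exp (-a * x) / a) atTop (𝓝 0) := by
    have : Tendsto (fun x : ℝ => Real.exp (-a * x)) atTop (𝓝 0) := by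
      have := Real.tendsto_exp_neg_atTop_nhds_zero.comp
        (Filter.Tendsto.const_mul_atTop ha tendsto_id)
      simpa [Function.comp_def, neg_mul] using this
    simpa using (this.neg.div_const a)
  have := integral_Ioi_of_hasDerivAt_of_tendsto hcont hd
    (exp_neg_integrableOn_Ioi c ha) htend
  rw [this]; ring

lemma Etail_nonneg {a u : ℝ} (hu : 0 < u) : 0 ≤ Etail a u :=
  setIntegral_nonneg measurableSet_Ioi fun t ht => by
    have : (0:ℝ) < t := hu.trans ht
    positivity

lemma Etail_le {a u : ℝ} (ha : 0 < a) (hu : 1 ≤ u) :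
    Etail a u ≤ Real.exp (-a * u) / a := by
  have h0u : (0:ℝ) < u := lt_of_lt_of_le one_pos hu
  rw [← integral_exp_neg_mul_Ioi (c := u) ha]
  refine setIntegral_mono_on (integrableOn_h ha h0u)
    (exp_neg_integrableOn_Ioi u ha) measurableSet_Ioi ?_
  intro t ht
  have ht1 : (1:ℝ) ≤ t := hu.trans (le_of_lt ht)
  calc Real.exp (-a * t) / t ≤ Real.exp (-a * t) / 1 :=
        div_le_div_of_nonneg_left (le_of_lt (Real.exp_pos _)) one_pos ht1
    _ = Real.exp (-a * t) := by rw [div_one]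

lemma Etail_tendsto {a : ℝ} (ha : 0 < a) : Tendsto (Etail a) atTop (𝓝 0) := by
  have hexp : Tendsto (fun u : ℝ => Real.exp (-a * u) / a) atTop (𝓝 0) := by
    have : Tendsto (fun x : ℝ => Real.exp (-a * x)) atTop (𝓝 0) := by
      have := Real.tendsto_exp_neg_atTop_nhds_zero.comp
        (Filter.Tendsto.const_mul_atTop ha tendsto_id)
      simpa [Function.comp_def, neg_mul] using this
    simpa using this.div_const a
  refine tendsto_of_tendsto_of_tendsto_of_le_of_le' tendsto_const_nhds hexp ?_ ?_
  · filter_upwards [eventually_ge_atTop (1:ℝ)] with u hu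
    exact Etail_nonneg (lt_of_lt_of_le one_pos hu)
  · filter_upwards [eventually_ge_atTop (1:ℝ)] with u hu
    exact Etail_le ha hu


lemma Etail_eq_sub {a : ℝ} (ha : 0 < a) {u : ℝ} (hu : 1 ≤ u) :
    Etail a u = Etail a 1 - ∫ t in (1:ℝ)..u, Real.exp (-a * t) / t := by
  have h0u : (0:ℝ) < u := lt_of_lt_of_le one_pos hu
  have hunion : Ioc (1:ℝ) u ∪ Ioi u = Ioi 1 := Ioc_union_Ioi_eq_Ioi hu
  have hsplit := setIntegral_union (f := fun t => Real.exp (-a * t) / t) (μ := volume)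
    (Ioc_disjoint_Ioi (le_refl u)) measurableSet_Ioi
    ((integrableOn_h ha one_pos).mono_set Ioc_subset_Ioi_self)
    (integrableOn_h ha h0u)
  rw [hunion] at hsplit
  rw [intervalIntegral.integral_of_le hu]
  show Etail a u = Etail a 1 - ∫ t in Ioc (1:ℝ) u, Real.exp (-a * t) / t
  unfold Etail
  rw [hsplit]; ring

lemma Etail_hasDeriv {a : ℝ} (ha : 0 < a) {u : ℝ} (hu : 1 < u) :
    HasDerivAt (Etail a) (-(Real.exp (-a * u) / u)) u := by
  have h0u : (0:ℝ) < u := lt_trans one_pos hu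
  have hint : IntervalIntegrable (fun t => Real.exp (-a * t) / t) volume 1 u := by
    rw [intervalIntegrable_iff_integrableOn_Ioc_of_le hu.le]
    exact (integrableOn_h ha one_pos).mono_set Ioc_subset_Ioi_self
  have hmeas : StronglyMeasurableAtFilter (fun t => Real.exp (-a * t) / t) (𝓝 u) volume :=
    (h_contOn a).stronglyMeasurableAtFilter isOpen_Ioi u h0u
  have hcont : ContinuousAt (fun t => Real.exp (-a * t) / t) u :=
    ContinuousAt.div (by fun_prop) continuousAt_id (ne_of_gt h0u)
  have hd := (intervalIntegral.integral_hasDerivAt_right hint hmeas hcont).const_sub (Etail a 1)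
  refine hd.congr_of_eventuallyEq ?_
  filter_upwards [isOpen_Ioi.mem_nhds (show u ∈ Ioi (1:ℝ) from hu)] with v hv
  exact Etail_eq_sub ha (le_of_lt hv)

lemma Etail_cwa {a : ℝ} (ha : 0 < a) :
    ContinuousWithinAt (Etail a) (Ici (1:ℝ)) 1 := by
  have hprim : Tendsto (fun v => ∫ t in (1:ℝ)..v, Real.exp (-a * t) / t)
      (𝓝[Ici (1:ℝ)] 1) (𝓝 0) := by
    refine squeeze_zero' (g := fun v : ℝ => v - 1) ?_ ?_ ?_
    · filter_upwards [eventually_mem_nhdsWithin] with v (hv : 1 ≤ v)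
      refine intervalIntegral.integral_nonneg hv ?_
      intro t ht
      have ht0 : (0:ℝ) < t := lt_of_lt_of_le one_pos ht.1
      positivity
    · filter_upwards [eventually_mem_nhdsWithin] with v (hv : 1 ≤ v)
      have hint : IntervalIntegrable (fun t => Real.exp (-a * t) / t) volume 1 v := by
        rw [intervalIntegrable_iff_integrableOn_Ioc_of_le hv]
        exact (integrableOn_h ha one_pos).mono_set Ioc_subset_Ioi_self
      have hb : ∀ t ∈ Icc (1:ℝ) v, Real.exp (-a * t) / t ≤ 1 := by
        intro t ht
        have ht1 : (1:ℝ) ≤ t := ht.1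
        have : Real.exp (-a * t) ≤ 1 := by
          rw [Real.exp_le_one_iff]
          have : (0:ℝ) < t := lt_of_lt_of_le one_pos ht1
          nlinarith
        calc Real.exp (-a * t) / t ≤ 1 / 1 :=
              div_le_div₀ (by norm_num) this one_pos ht1
          _ = 1 := by norm_num
      calc (∫ t in (1:ℝ)..v, Real.exp (-a * t) / t)
            ≤ ∫ _t in (1:ℝ)..v, (1:ℝ) :=
              intervalIntegral.integral_mono_on hv hint intervalIntegrable_const hb
        _ = v - 1 := by simp
    · have : Tendsto (fun v : ℝ => v - 1) (𝓝[Ici (1:ℝ)] 1) (𝓝 0) := by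
        have h : Tendsto (fun v : ℝ => v - 1) (𝓝 1) (𝓝 (1 - 1)) :=
          (continuous_id.sub continuous_const).tendsto (1:ℝ)
        simpa using h.mono_left nhdsWithin_le_nhds
      exact this
  unfold ContinuousWithinAt
  have heq : ∀ᶠ v in 𝓝[Ici (1:ℝ)] 1,
      Etail a 1 - (∫ t in (1:ℝ)..v, Real.exp (-a * t) / t) = Etail a v := by
    filter_upwards [eventually_mem_nhdsWithin] with v (hv : 1 ≤ v)
    exact (Etail_eq_sub ha hv).symm
  have : Tendsto (fun v => Etail a 1 - ∫ t in (1:ℝ)..v, Real.exp (-a * t) / t)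
      (𝓝[Ici (1:ℝ)] 1) (𝓝 (Etail a 1)) := by
    simpa using (tendsto_const_nhds (x := Etail a 1)).sub hprim
  exact Tendsto.congr' heq this


lemma shift_Ioi (f : ℝ → ℝ) (c : ℝ) :
    ∫ x in Ioi c, f (x + 1) = ∫ y in Ioi (c + 1), f y := by
  have h := (measurePreserving_add_right volume (1:ℝ)).setIntegral_preimage_emb
    (measurableEmbedding_addRight 1) f (Ioi (c + 1))
  rw [← h]
  congr 1
  rw [preimage_add_const_Ioi]
  norm_num


lemma contOn_logdiff (a β : ℝ) (hβ : 0 ≤ β) :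
    ContinuousOn (fun α => (Real.log (1 + α) - Real.log (1 + β)) * Real.exp (-a * α))
      (Ioi β) := by
  intro α hα
  have h1α : (0:ℝ) < 1 + α := by have := hβ.trans_lt hα; linarith
  have hlog : ContinuousAt (fun α : ℝ => Real.log (1 + α)) α :=
    (Real.continuousAt_log (ne_of_gt h1α)).comp
      ((continuous_const.add continuous_id).continuousAt)
  exact ((hlog.sub continuousAt_const).mul (by fun_prop)).continuousWithinAt

lemma logdiff_le {a β α : ℝ} (ha : 0 < a) (hβ : 0 ≤ β) (hα : β < α) :
    (Real.log (1 + α) - Real.log (1 + β)) * Real.exp (-a * α)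
      ≤ (2 / a) * Real.exp (-(a / 2) * α) := by
  have hα0 : 0 < α := hβ.trans_lt hα
  have h1 : Real.log (1 + α) ≤ α := by
    have := Real.log_le_sub_one_of_pos (x := 1 + α) (by linarith)
    linarith
  have hlogβ : 0 ≤ Real.log (1 + β) := Real.log_nonneg (by linarith)
  have h2 : (a / 2) * α ≤ Real.exp ((a / 2) * α) :=
    le_trans (by linarith) (Real.add_one_le_exp _)
  have h3 : α ≤ (2 / a) * Real.exp ((a / 2) * α) := by
    calc α = (2 / a) * ((a / 2) * α) := by field_simp
      _ ≤ (2 / a) * Real.exp ((a / 2) * α) := by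
          apply mul_le_mul_of_nonneg_left h2 (by positivity)
  calc (Real.log (1 + α) - Real.log (1 + β)) * Real.exp (-a * α)
      ≤ α * Real.exp (-a * α) := by
        apply mul_le_mul_of_nonneg_right (by linarith) (Real.exp_pos _).le
    _ ≤ ((2 / a) * Real.exp ((a / 2) * α)) * Real.exp (-a * α) := by
        apply mul_le_mul_of_nonneg_right h3 (Real.exp_pos _).le
    _ = (2 / a) * Real.exp (-(a / 2) * α) := by
        rw [mul_assoc, ← Real.exp_add]; ring_nf

lemma logdiff_nonneg {β α : ℝ} (hβ : 0 ≤ β) (hα : β ≤ α) :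
    0 ≤ Real.log (1 + α) - Real.log (1 + β) := by
  have := Real.log_le_log (by linarith : (0:ℝ) < 1 + β) (by linarith : (1:ℝ) + β ≤ 1 + α)
  linarith

lemma integrableOn_logdiff {a β : ℝ} (ha : 0 < a) (hβ : 0 ≤ β) :
    IntegrableOn (fun α => (Real.log (1 + α) - Real.log (1 + β)) * Real.exp (-a * α))
      (Ioi β) := by
  refine Integrable.mono' ((exp_neg_integrableOn_Ioi β (half_pos ha)).const_mul (2 / a))
    ((contOn_logdiff a β hβ).aestronglyMeasurable measurableSet_Ioi) ?_
  filter_upwards [ae_restrict_mem measurableSet_Ioi] with α hα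
  rw [Real.norm_eq_abs, abs_of_nonneg
    (mul_nonneg (logdiff_nonneg hβ (le_of_lt hα)) (Real.exp_pos _).le)]
  exact logdiff_le ha hβ hα

lemma integrableOn_expdiv {a β : ℝ} (ha : 0 < a) (hβ : 0 ≤ β) :
    IntegrableOn (fun α => Real.exp (-a * α) / (1 + α)) (Ioi β) := by
  have hcont : ContinuousOn (fun α => Real.exp (-a * α) / (1 + α)) (Ioi β) := by
    intro α hα
    have h1α : (0:ℝ) < 1 + α := by have := hβ.trans_lt hα; linarith
    exact (ContinuousAt.div (by fun_prop) (by fun_prop) (ne_of_gt h1α)).continuousWithinAt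
  refine Integrable.mono' (exp_neg_integrableOn_Ioi β ha)
    (hcont.aestronglyMeasurable measurableSet_Ioi) ?_
  filter_upwards [ae_restrict_mem measurableSet_Ioi] with α hα
  have h1α : (1:ℝ) ≤ 1 + α := by have := hβ.trans_lt hα; linarith
  rw [Real.norm_eq_abs, abs_of_nonneg (div_nonneg (Real.exp_pos _).le (by linarith))]
  exact div_le_self (Real.exp_pos _).le h1α


lemma exp_neg_hasDeriv (a x : ℝ) (ha : a ≠ 0) :
    HasDerivAt (fun x : ℝ => -Real.exp (-a * x) / a) (Real.exp (-a * x)) x := by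
  have h0 : HasDerivAt (fun y : ℝ => -a * y) (-a) x := by
    simpa using (hasDerivAt_id x).const_mul (-a)
  have h2 := h0.exp.neg.div_const a
  refine h2.congr_deriv ?_
  field_simp

lemma tendsto_mul_exp_neg {a : ℝ} (ha : 0 < a) :
    Tendsto (fun x : ℝ => x * Real.exp (-a * x)) atTop (𝓝 0) := by
  simpa [Real.rpow_one] using tendsto_rpow_mul_exp_neg_mul_atTop_nhds_zero 1 a ha

lemma inner_parts {a β : ℝ} (ha : 0 < a) (hβ : 0 < β) :
    ∫ α in Ioi β, (Real.log (1 + α) - Real.log (1 + β)) * Real.exp (-a * α)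
      = (1 / a) * ∫ α in Ioi β, Real.exp (-a * α) / (1 + α) := by
  set F : ℝ → ℝ := fun α => (Real.log (1 + α) - Real.log (1 + β)) * (-Real.exp (-a * α) / a)
    with hF
  set f' : ℝ → ℝ := fun α => (Real.log (1 + α) - Real.log (1 + β)) * Real.exp (-a * α)
    + (-(1 / a)) * (Real.exp (-a * α) / (1 + α)) with hf'
  have hder : ∀ α ∈ Ioi β, HasDerivAt F (f' α) α := by
    intro α hα
    have h1α : (0:ℝ) < 1 + α := by have := hβ.trans hα; linarith
    have hlog : HasDerivAt (fun α : ℝ => Real.log (1 + α) - Real.log (1 + β))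
        (1 / (1 + α)) α := by
      have := (((hasDerivAt_id α).const_add 1).log (ne_of_gt h1α)).sub_const
        (Real.log (1 + β))
      simpa [one_div] using this
    have := hlog.mul (exp_neg_hasDeriv a α (ne_of_gt ha))
    refine this.congr_deriv ?_
    simp only [hf']
    field_simp
    ring
  have hcont : ContinuousWithinAt F (Ici β) β := by
    have h1β : (0:ℝ) < 1 + β := by linarith
    have hlog : ContinuousAt (fun α : ℝ => Real.log (1 + α)) β :=
      (Real.continuousAt_log (ne_of_gt h1β)).comp
        ((continuous_const.add continuous_id).continuousAt)
    exact (((hlog.sub continuousAt_const).mul (by fun_prop))).continuousWithinAt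
  have hint : IntegrableOn f' (Ioi β) := by
    exact (integrableOn_logdiff ha hβ.le).add
      ((integrableOn_expdiv ha hβ.le).const_mul (-(1 / a)))
  have htend : Tendsto F atTop (𝓝 0) := by
    have T0 : Tendsto (fun α => (Real.log (1 + α) - Real.log (1 + β)) * Real.exp (-a * α))
        atTop (𝓝 0) := by
      refine squeeze_zero' ?_ ?_ (tendsto_mul_exp_neg ha)
      · filter_upwards [eventually_ge_atTop β] with α hα
        exact mul_nonneg (logdiff_nonneg hβ.le hα) (Real.exp_pos _).le
      · filter_upwards [eventually_ge_atTop β, eventually_ge_atTop (0:ℝ)] with α hα hα0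
        have h1 : Real.log (1 + α) ≤ α := by
          have := Real.log_le_sub_one_of_pos (x := 1 + α) (by linarith)
          linarith
        have hlogβ : 0 ≤ Real.log (1 + β) := Real.log_nonneg (by linarith)
        exact mul_le_mul_of_nonneg_right (by linarith) (Real.exp_pos _).le
    have : Tendsto (fun α => (-(1/a)) *
        ((Real.log (1 + α) - Real.log (1 + β)) * Real.exp (-a * α))) atTop (𝓝 0) := by
      simpa using T0.const_mul (-(1/a))
    refine this.congr fun α => ?_
    simp only [hF]; ring
  have key := integral_Ioi_of_hasDerivAt_of_tendsto hcont hder hint htend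
  have hFβ : F β = 0 := by simp [hF]
  rw [hFβ, sub_zero] at key
  have hsplit : ∫ α in Ioi β, f' α
      = (∫ α in Ioi β, (Real.log (1 + α) - Real.log (1 + β)) * Real.exp (-a * α))
        + ∫ α in Ioi β, (-(1 / a)) * (Real.exp (-a * α) / (1 + α)) := by
    exact integral_add (integrableOn_logdiff ha hβ.le)
      ((integrableOn_expdiv ha hβ.le).const_mul (-(1 / a)))
  rw [key] at hsplit
  rw [MeasureTheory.integral_const_mul] at hsplit
  linarith


lemma outer_parts {a b : ℝ} (ha : 0 < a) (hb : 0 < b) :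
    ∫ u in Ioi (1:ℝ), Real.exp (-b * u) * Etail a u
      = (Real.exp (-b) * Etail a 1 - Etail (a + b) 1) / b := by
  set F : ℝ → ℝ := fun u => (-Real.exp (-b * u) / b) * Etail a u with hF
  set f' : ℝ → ℝ := fun u => Real.exp (-b * u) * Etail a u
    + (1 / b) * (Real.exp (-(a + b) * u) / u) with hf'
  have hexpab : ∀ u : ℝ, Real.exp (-(a + b) * u) = Real.exp (-a * u) * Real.exp (-b * u) := by
    intro u; rw [← Real.exp_add]; ring_nf
  have hder : ∀ u ∈ Ioi (1:ℝ), HasDerivAt F (f' u) u := by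
    intro u hu
    have h0u : (0:ℝ) < u := lt_trans one_pos hu
    have := (exp_neg_hasDeriv b u (ne_of_gt hb)).mul (Etail_hasDeriv ha hu)
    refine this.congr_deriv ?_
    simp only [hf', hexpab u]
    field_simp
  have hcont : ContinuousWithinAt F (Ici (1:ℝ)) 1 := by
    refine ContinuousWithinAt.mul ?_ (Etail_cwa ha)
    exact (Continuous.continuousAt (by fun_prop)).continuousWithinAt
  have hcontE : ContinuousOn (Etail a) (Ioi (1:ℝ)) := fun u hu =>
    ((Etail_hasDeriv ha hu).continuousAt).continuousWithinAt
  have hint1 : IntegrableOn (fun u => Real.exp (-b * u) * Etail a u) (Ioi (1:ℝ)) := by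
    refine Integrable.mono' ((exp_neg_integrableOn_Ioi 1 hb).const_mul (Real.exp (-a) / a))
      ((ContinuousOn.mul (by fun_prop) hcontE).aestronglyMeasurable measurableSet_Ioi) ?_
    filter_upwards [ae_restrict_mem measurableSet_Ioi] with u hu
    have h0u : (0:ℝ) < u := lt_trans one_pos hu
    rw [Real.norm_eq_abs, abs_of_nonneg (mul_nonneg (Real.exp_pos _).le (Etail_nonneg h0u))]
    have h1 : Etail a u ≤ Real.exp (-a) / a := by
      refine le_trans (Etail_le ha (le_of_lt hu)) ?_
      gcongr
      have hu1 : (1:ℝ) < u := hu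
      nlinarith
    calc Real.exp (-b * u) * Etail a u ≤ Real.exp (-b * u) * (Real.exp (-a) / a) :=
          mul_le_mul_of_nonneg_left h1 (Real.exp_pos _).le
      _ = Real.exp (-a) / a * Real.exp (-b * u) := by ring
  have hint2 : IntegrableOn (fun u => (1 / b) * (Real.exp (-(a + b) * u) / u)) (Ioi (1:ℝ)) :=
    (integrableOn_h (by linarith) one_pos).const_mul (1 / b)
  have hint : IntegrableOn f' (Ioi (1:ℝ)) := hint1.add hint2
  have htend : Tendsto F atTop (𝓝 0) := by
    have h1 : Tendsto (fun u : ℝ => -Real.exp (-b * u) / b) atTop (𝓝 0) := by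
      have : Tendsto (fun x : ℝ => Real.exp (-b * x)) atTop (𝓝 0) := by
        have := Real.tendsto_exp_neg_atTop_nhds_zero.comp
          (Filter.Tendsto.const_mul_atTop hb tendsto_id)
        simpa [Function.comp_def, neg_mul] using this
      simpa using this.neg.div_const b
    have h2 := h1.mul (Etail_tendsto ha)
    rw [hF]
    simpa using h2
  have key := integral_Ioi_of_hasDerivAt_of_tendsto hcont hder hint htend
  have hsplit : ∫ u in Ioi (1:ℝ), f' u
      = (∫ u in Ioi (1:ℝ), Real.exp (-b * u) * Etail a u)
        + (1 / b) * Etail (a + b) 1 := by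
    rw [show (fun u => f' u) = f' from rfl]
    rw [hf']
    rw [integral_add hint1 hint2, MeasureTheory.integral_const_mul]
    rfl
  rw [hsplit] at key
  have hF1 : F 1 = -Real.exp (-b * 1) / b * Etail a 1 := rfl
  rw [hF1] at key
  rw [eq_div_iff (ne_of_gt hb)]
  rw [mul_one] at key
  field_simp at key ⊢
  linarith


lemma shift_inner {a β : ℝ} (hβ : 0 < β) :
    ∫ α in Ioi β, Real.exp (-a * α) / (1 + α) = Real.exp a * Etail a (β + 1) := by
  have hfun : (fun α : ℝ => Real.exp (-a * α) / (1 + α))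
      = fun x => (fun y => Real.exp a * (Real.exp (-a * y) / y)) (x + 1) := by
    funext x
    simp only []
    rw [mul_div_assoc', ← Real.exp_add]
    have : a + -a * (x + 1) = -a * x := by ring
    rw [this]
    ring_nf
  rw [hfun, shift_Ioi (fun y => Real.exp a * (Real.exp (-a * y) / y)) β,
    MeasureTheory.integral_const_mul]
  rfl

lemma inner_value {a β : ℝ} (ha : 0 < a) (hβ : 0 < β) :
    ∫ α in Ioi (0:ℝ), max (Real.log (1 + α) - Real.log (1 + β)) 0 * Real.exp (-a * α)
      = (1 / a) * (Real.exp a * Etail a (β + 1)) := by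
  set f : ℝ → ℝ := fun α => max (Real.log (1 + α) - Real.log (1 + β)) 0 * Real.exp (-a * α)
    with hf
  have hzero : EqOn f (fun _ => (0:ℝ)) (Ioc 0 β) := by
    intro α hα
    have : Real.log (1 + α) - Real.log (1 + β) ≤ 0 := by
      have := Real.log_le_log (by linarith [hα.1] : (0:ℝ) < 1 + α)
        (by linarith [hα.2] : (1:ℝ) + α ≤ 1 + β)
      linarith
    simp [hf, max_eq_right this]
  have heqIoi : EqOn f
      (fun α => (Real.log (1 + α) - Real.log (1 + β)) * Real.exp (-a * α)) (Ioi β) := by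
    intro α hα
    have h1 : Real.log (1 + β) ≤ Real.log (1 + α) :=
      Real.log_le_log (by linarith) (by linarith [mem_Ioi.mp hα])
    simp [hf, max_eq_left (sub_nonneg.mpr h1)]
  have hIoc_int : IntegrableOn f (Ioc 0 β) :=
    (integrableOn_zero (μ := volume)).congr_fun (fun α hα => (hzero hα).symm) measurableSet_Ioc
  have hIoi_int : IntegrableOn f (Ioi β) :=
    (integrableOn_logdiff ha hβ.le).congr_fun (fun α hα => (heqIoi hα).symm) measurableSet_Ioi
  rw [← Ioc_union_Ioi_eq_Ioi hβ.le,
    setIntegral_union (Ioc_disjoint_Ioi le_rfl) measurableSet_Ioi hIoc_int hIoi_int]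
  rw [setIntegral_congr_fun measurableSet_Ioc hzero,
    setIntegral_congr_fun measurableSet_Ioi heqIoi]
  simp only [integral_zero, zero_add]
  rw [inner_parts ha hβ, shift_inner hβ]

/-- independent-channel special case of Theorem 1
(average secrecy capacity for independent exponential SNRs). -/
theorem average_secrecy_capacity_independent
    (lam1 lam2 : ℝ) (hlam1 : 0 < lam1) (hlam2 : 0 < lam2) :
    ∫ β in Ioi (0:ℝ), ∫ α in Ioi (0:ℝ),
        max (Real.log (1 + α) - Real.log (1 + β)) 0 *
          ((1 / (lam1 * lam2)) * Real.exp (-α / lam1 - β / lam2)) =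
      Real.exp (1 / lam1) * E1 (1 / lam1) -
        Real.exp (1 / lam1 + 1 / lam2) * E1 (1 / lam1 + 1 / lam2) := by
  set a : ℝ := 1 / lam1 with hadef
  set b : ℝ := 1 / lam2 with hbdef
  have ha : 0 < a := by positivity
  have hb : 0 < b := by positivity
  have hcongr : EqOn
      (fun β => ∫ α in Ioi (0:ℝ), max (Real.log (1 + α) - Real.log (1 + β)) 0 *
          ((1 / (lam1 * lam2)) * Real.exp (-α / lam1 - β / lam2)))
      (fun β => (b * Real.exp a) * (Real.exp (-b * β) * Etail a (β + 1)))
      (Ioi (0:ℝ)) := by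
    intro β hβ
    have hβ0 : (0:ℝ) < β := hβ
    have hpt : ∀ α : ℝ, max (Real.log (1 + α) - Real.log (1 + β)) 0 *
        ((1 / (lam1 * lam2)) * Real.exp (-α / lam1 - β / lam2))
        = ((1 / (lam1 * lam2)) * Real.exp (-b * β)) *
            (max (Real.log (1 + α) - Real.log (1 + β)) 0 * Real.exp (-a * α)) := by
      intro α
      have hexp : Real.exp (-α / lam1 - β / lam2) = Real.exp (-a * α) * Real.exp (-b * β) := by
        rw [← Real.exp_add]
        congr 1
        have h1 : lam1 ≠ 0 := ne_of_gt hlam1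
        have h2 : lam2 ≠ 0 := ne_of_gt hlam2
        rw [hadef, hbdef]
        field_simp
        ring
      rw [hexp]; ring
    show (∫ α in Ioi (0:ℝ), max (Real.log (1 + α) - Real.log (1 + β)) 0 *
          ((1 / (lam1 * lam2)) * Real.exp (-α / lam1 - β / lam2)))
        = (b * Real.exp a) * (Real.exp (-b * β) * Etail a (β + 1))
    simp only [hpt]
    rw [MeasureTheory.integral_const_mul, inner_value ha hβ0]
    have hab : 1 / (lam1 * lam2) = a * b := by
      rw [hadef, hbdef]; field_simp
    rw [hab]
    field_simp
  rw [setIntegral_congr_fun measurableSet_Ioi hcongr, MeasureTheory.integral_const_mul]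
  have hshift : ∫ β in Ioi (0:ℝ), Real.exp (-b * β) * Etail a (β + 1)
      = Real.exp b * ∫ u in Ioi (1:ℝ), Real.exp (-b * u) * Etail a u := by
    have hfun : (fun β : ℝ => Real.exp (-b * β) * Etail a (β + 1))
        = fun x => (fun y => Real.exp b * (Real.exp (-b * y) * Etail a y)) (x + 1) := by
      funext x
      simp only []
      rw [← mul_assoc, ← Real.exp_add]
      have : b + -b * (x + 1) = -b * x := by ring
      rw [this]
    rw [hfun, shift_Ioi (fun y => Real.exp b * (Real.exp (-b * y) * Etail a y)) 0,
      zero_add, MeasureTheory.integral_const_mul]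
  rw [hshift, outer_parts ha hb]
  have hE1a : E1 a = Etail a 1 := rfl
  have hE1ab : E1 (a + b) = Etail (a + b) 1 := rfl
  rw [hE1a, hE1ab, Real.exp_add a b, Real.exp_neg]
  have hexpb : Real.exp b ≠ 0 := (Real.exp_pos b).ne'
  field_simp
end

section
/- (Independent-channel special case of Theorem 2) Let λ1, λ2 > 0 and let R > 0. For independent exponential SNRs with joint density f_0(α,β) = (1/(λ1 λ2)) e^{−α/λ1 − β/λ2}, the secrecy outage probability satisfies P_out(R) = 1 − ∫_0^∞ ( ∫_{e^R (1+β) − 1}^∞ f_0(α,β) dα ) dβ = 1 − (λ1 / (λ1 + e^R λ2)) exp(−(e^R − 1)/λ1). -/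
open MeasureTheory Real Set

lemma exp_neg_mul_integral_Ioi (a : ℝ) {b : ℝ} (hb : 0 < b) :
    (∫ x in Ioi a, Real.exp (-(b * x))) = Real.exp (-(b * a)) / b := by
  have h := MeasureTheory.integral_comp_mul_left_Ioi (fun x => Real.exp (-x)) a hb
  simpa [integral_exp_neg_Ioi, integral_exp_Iic, smul_eq_mul, div_eq_inv_mul] using h

/-- independent-channel special case of Theorem 2
(secrecy outage probability for independent exponential SNRs). -/
theorem outage_probability_independent
    (lam1 lam2 R : ℝ) (hlam1 : 0 < lam1) (hlam2 : 0 < lam2) (hR : 0 < R) :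
    1 - (∫ β in Ioi (0:ℝ), ∫ α in Ioi (Real.exp R * (1 + β) - 1),
        (1 / (lam1 * lam2)) * Real.exp (-α / lam1 - β / lam2)) =
      1 - (lam1 / (lam1 + Real.exp R * lam2)) *
        Real.exp (-(Real.exp R - 1) / lam1) := by
  have hb1 : (0:ℝ) < lam1⁻¹ := inv_pos.mpr hlam1
  have inner : ∀ β : ℝ,
      (∫ α in Ioi (Real.exp R * (1 + β) - 1),
        (1 / (lam1 * lam2)) * Real.exp (-α / lam1 - β / lam2))
      = (1 / (lam1 * lam2)) * Real.exp (-β / lam2) *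
          (Real.exp (-(lam1⁻¹ * (Real.exp R * (1 + β) - 1))) / lam1⁻¹) := by
    intro β
    have : ∀ α : ℝ, (1 / (lam1 * lam2)) * Real.exp (-α / lam1 - β / lam2)
        = ((1 / (lam1 * lam2)) * Real.exp (-β / lam2)) * Real.exp (-(lam1⁻¹ * α)) := by
      intro α
      rw [mul_assoc, ← Real.exp_add]
      ring_nf
    simp_rw [this]
    rw [MeasureTheory.integral_const_mul, exp_neg_mul_integral_Ioi _ hb1]
  rw [congrArg (fun f => ∫ β in Ioi (0:ℝ), f β) (funext inner)]
  have key : ∀ β : ℝ,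
      (1 / (lam1 * lam2)) * Real.exp (-β / lam2) *
          (Real.exp (-(lam1⁻¹ * (Real.exp R * (1 + β) - 1))) / lam1⁻¹)
      = ((1 / lam2) * Real.exp (-(Real.exp R - 1) / lam1)) *
          Real.exp (-((lam2⁻¹ + Real.exp R * lam1⁻¹) * β)) := by
    intro β
    have e1 : Real.exp (-β / lam2) * Real.exp (-(lam1⁻¹ * (Real.exp R * (1 + β) - 1)))
        = Real.exp (-(Real.exp R - 1) / lam1) *
            Real.exp (-((lam2⁻¹ + Real.exp R * lam1⁻¹) * β)) := by
      rw [← Real.exp_add, ← Real.exp_add]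
      congr 1
      field_simp
      ring
    calc (1 / (lam1 * lam2)) * Real.exp (-β / lam2) *
          (Real.exp (-(lam1⁻¹ * (Real.exp R * (1 + β) - 1))) / lam1⁻¹)
        = (1 / lam2) * (Real.exp (-β / lam2) *
            Real.exp (-(lam1⁻¹ * (Real.exp R * (1 + β) - 1)))) := by
          field_simp
      _ = _ := by rw [e1]; ring
  rw [congrArg (fun f => ∫ β in Ioi (0:ℝ), f β) (funext key)]
  have hbpos : (0:ℝ) < lam2⁻¹ + Real.exp R * lam1⁻¹ := by positivity
  rw [MeasureTheory.integral_const_mul, exp_neg_mul_integral_Ioi _ hbpos]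
  have hden : lam1 + Real.exp R * lam2 ≠ 0 := by positivity
  congr 1
  rw [mul_zero, neg_zero, Real.exp_zero]
  field_simp
end

section
/- Let λ1, λ2 > 0, 0 ≤ ρ < 1, and let k be a natural number. Fubini-type decomposition of the k-th term of the average secrecy capacity: ∫_0^∞ ∫_0^∞ max(ln(1+α) − ln(1+β), 0) f_k(α,β) dα dβ = R_k^1 − R_k^2, where f_k(α,β) = (1/(λ1 λ2)) exp(−(α/λ1 + β/λ2)/(1−ρ)) (α/λ1)^k (β/λ2)^k, R_k^1 = ∫_0^∞ ln(1+λ1 u) e^{−u/(1−ρ)} u^k ( ∫_0^{λ1 u/λ2} e^{−v/(1−ρ)} v^k dv ) du, and R_k^2 = ∫_0^∞ ln(1+λ2 v) e^{−v/(1−ρ)} v^k ( ∫_{λ2 v/λ1}^∞ e^{−u/(1−ρ)} u^k du ) dv. -/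
open MeasureTheory Real Set

private lemma subst_Ioi {c : ℝ} (hc : 0 < c) (f : ℝ → ℝ) :
    ∫ x in Ioi (0:ℝ), f x = c * ∫ x in Ioi (0:ℝ), f (c * x) := by
  rw [integral_comp_mul_left_Ioi f 0 hc, mul_zero, smul_eq_mul, ← mul_assoc,
    mul_inv_cancel₀ hc.ne', one_mul]

private lemma aux_g_int {s : ℝ} (hs : 0 < s) (k : ℕ) :
    IntegrableOn (fun t : ℝ => Real.exp (-t / s) * t ^ k) (Ioi 0) := by
  have h := integrableOn_rpow_mul_exp_neg_mul_rpow (p := 1) (s := (k : ℝ)) (b := s⁻¹)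
    (lt_of_lt_of_le neg_one_lt_zero (Nat.cast_nonneg k)) one_pos (inv_pos.mpr hs)
  refine h.congr_fun (fun x hx => ?_) measurableSet_Ioi
  have h1 : -s⁻¹ * x = -x / s := by field_simp
  beta_reduce
  rw [Real.rpow_one, Real.rpow_natCast, h1]
  ring

private lemma aux_h_int {s c : ℝ} (hs : 0 < s) (hc : 0 < c) (k : ℕ) :
    IntegrableOn (fun t : ℝ => Real.log (1 + c * t) * (Real.exp (-t / s) * t ^ k)) (Ioi 0) := by
  have hb : IntegrableOn (fun t : ℝ => c * (Real.exp (-t / s) * t ^ (k + 1))) (Ioi 0) :=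
    (aux_g_int hs (k + 1)).const_mul c
  refine hb.mono' ?_ ?_
  · refine Measurable.aestronglyMeasurable (Measurable.mul ?_ ?_)
    · exact Real.measurable_log.comp (measurable_const.add (measurable_id.const_mul c))
    · exact ((measurable_id.neg.div_const s).exp).mul (measurable_id.pow_const k)
  · rw [ae_restrict_iff' measurableSet_Ioi]
    filter_upwards with t ht
    have ht0 : (0:ℝ) < t := ht
    have h1 : (0:ℝ) < 1 + c * t := by positivity
    have hlog0 : 0 ≤ Real.log (1 + c * t) := Real.log_nonneg (by nlinarith)
    have hloglt : Real.log (1 + c * t) ≤ c * t := by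
      have := Real.log_le_sub_one_of_pos h1
      linarith
    have hg0 : 0 ≤ Real.exp (-t / s) * t ^ k := by positivity
    rw [Real.norm_eq_abs, abs_of_nonneg (mul_nonneg hlog0 hg0)]
    calc Real.log (1 + c * t) * (Real.exp (-t / s) * t ^ k)
        ≤ (c * t) * (Real.exp (-t / s) * t ^ k) := mul_le_mul_of_nonneg_right hloglt hg0
      _ = c * (Real.exp (-t / s) * t ^ (k + 1)) := by ring

/-- Fubini-type decomposition of the k-th term of the average
secrecy capacity into R_k^1 − R_k^2. -/
theorem kth_term_decomposition
    (lam1 lam2 ρ : ℝ) (k : ℕ) (hlam1 : 0 < lam1) (hlam2 : 0 < lam2)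
    (hρ0 : 0 ≤ ρ) (hρ1 : ρ < 1) :
    ∫ β in Ioi (0:ℝ), ∫ α in Ioi (0:ℝ),
        max (Real.log (1 + α) - Real.log (1 + β)) 0 *
          ((1 / (lam1 * lam2)) * Real.exp (-(α / lam1 + β / lam2) / (1 - ρ)) *
            (α / lam1) ^ k * (β / lam2) ^ k) =
      (∫ u in Ioi (0:ℝ), Real.log (1 + lam1 * u) * Real.exp (-u / (1 - ρ)) * u ^ k *
          ∫ v in (0:ℝ)..(lam1 * u / lam2), Real.exp (-v / (1 - ρ)) * v ^ k) -
        ∫ v in Ioi (0:ℝ), Real.log (1 + lam2 * v) * Real.exp (-v / (1 - ρ)) * v ^ k *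
          ∫ u in Ioi (lam2 * v / lam1), Real.exp (-u / (1 - ρ)) * u ^ k := by
  have hs : (0:ℝ) < 1 - ρ := by linarith
  set g : ℝ → ℝ := fun t => Real.exp (-t / (1 - ρ)) * t ^ k with hgdef
  set h1 : ℝ → ℝ := fun u => Real.log (1 + lam1 * u) * g u with hh1def
  set h2 : ℝ → ℝ := fun v => Real.log (1 + lam2 * v) * g v with hh2def
  set T : ℝ → ℝ → ℝ :=
    fun u v => max (Real.log (1 + lam1 * u) - Real.log (1 + lam2 * v)) 0 * (g u * g v) with hTdef
  set S : Set (ℝ × ℝ) := {p : ℝ × ℝ | lam2 * p.2 < lam1 * p.1} with hSdef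
  have hS : MeasurableSet S :=
    measurableSet_lt (measurable_snd.const_mul lam2) (measurable_fst.const_mul lam1)
  set F1 : ℝ × ℝ → ℝ := S.indicator (fun p => h1 p.1 * g p.2) with hF1def
  set F2 : ℝ × ℝ → ℝ := S.indicator (fun p => g p.1 * h2 p.2) with hF2def
  have hg : Integrable g (volume.restrict (Ioi 0)) := aux_g_int hs k
  have hh1 : Integrable h1 (volume.restrict (Ioi 0)) := aux_h_int hs hlam1 k
  have hh2 : Integrable h2 (volume.restrict (Ioi 0)) := aux_h_int hs hlam2 k
  have hF1 : Integrable F1 ((volume.restrict (Ioi 0)).prod (volume.restrict (Ioi 0))) :=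
    (hh1.mul_prod hg).indicator hS
  have hF2 : Integrable F2 ((volume.restrict (Ioi 0)).prod (volume.restrict (Ioi 0))) :=
    (hg.mul_prod hh2).indicator hS
  -- Step 1: substitution α = lam1 u, β = lam2 v
  have step1 : (∫ β in Ioi (0:ℝ), ∫ α in Ioi (0:ℝ),
        max (Real.log (1 + α) - Real.log (1 + β)) 0 *
          ((1 / (lam1 * lam2)) * Real.exp (-(α / lam1 + β / lam2) / (1 - ρ)) *
            (α / lam1) ^ k * (β / lam2) ^ k))
      = ∫ v in Ioi (0:ℝ), ∫ u in Ioi (0:ℝ), T u v := by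
    rw [subst_Ioi hlam2]
    have hv_eq : EqOn
        (fun v : ℝ => ∫ α in Ioi (0:ℝ),
          max (Real.log (1 + α) - Real.log (1 + lam2 * v)) 0 *
            ((1 / (lam1 * lam2)) * Real.exp (-(α / lam1 + lam2 * v / lam2) / (1 - ρ)) *
              (α / lam1) ^ k * (lam2 * v / lam2) ^ k))
        (fun v : ℝ => lam1 * (1 / (lam1 * lam2)) * ∫ u in Ioi (0:ℝ), T u v) (Ioi 0) := by
      intro v hv
      simp only []
      have key : (∫ u in Ioi (0:ℝ), (1 / (lam1 * lam2)) * T u v)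
          = (1 / (lam1 * lam2)) * ∫ u in Ioi (0:ℝ), T u v :=
        MeasureTheory.integral_const_mul _ _
      rw [subst_Ioi hlam1, mul_assoc, ← key]
      congr 1
      refine setIntegral_congr_fun measurableSet_Ioi fun u hu => ?_
      have e1 : lam1 * u / lam1 = u := mul_div_cancel_left₀ u hlam1.ne'
      have e2 : lam2 * v / lam2 = v := mul_div_cancel_left₀ v hlam2.ne'
      rw [e1, e2]
      have e3 : Real.exp (-(u + v) / (1 - ρ))
          = Real.exp (-u / (1 - ρ)) * Real.exp (-v / (1 - ρ)) := by
        rw [← Real.exp_add]; congr 1; ring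
      rw [e3, hTdef, hgdef]
      ring
    have hone : lam2 * (lam1 * (1 / (lam1 * lam2))) = 1 := by
      field_simp
    rw [setIntegral_congr_fun measurableSet_Ioi hv_eq, MeasureTheory.integral_const_mul,
      ← mul_assoc, hone, one_mul]
  -- Step 2: pointwise T = F1 - F2
  have hTF : ∀ u ∈ Ioi (0:ℝ), ∀ v ∈ Ioi (0:ℝ), T u v = F1 (u, v) - F2 (u, v) := by
    intro u hu v hv
    have hu0 : (0:ℝ) < u := hu
    have hv0 : (0:ℝ) < v := hv
    by_cases h : lam2 * v < lam1 * u
    · have hmem : ((u, v) : ℝ × ℝ) ∈ S := h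
      have hlt : Real.log (1 + lam2 * v) < Real.log (1 + lam1 * u) :=
        Real.log_lt_log (by positivity) (by linarith)
      simp only [hF1def, hF2def, Set.indicator_of_mem hmem, hTdef, hh1def, hh2def, hgdef]
      rw [max_eq_left (sub_nonneg.mpr hlt.le)]
      ring
    · have hmem : ((u, v) : ℝ × ℝ) ∉ S := h
      have hle : Real.log (1 + lam1 * u) ≤ Real.log (1 + lam2 * v) :=
        Real.log_le_log (by positivity) (by push_neg at h; linarith)
      simp only [hF1def, hF2def, Set.indicator_of_notMem hmem, hTdef]
      rw [max_eq_right (sub_nonpos.mpr hle)]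
      ring
  -- Step 3: split the double integral
  have hsplit : (∫ v in Ioi (0:ℝ), ∫ u in Ioi (0:ℝ), T u v)
      = (∫ v in Ioi (0:ℝ), ∫ u in Ioi (0:ℝ), F1 (u, v))
        - ∫ v in Ioi (0:ℝ), ∫ u in Ioi (0:ℝ), F2 (u, v) := by
    rw [← integral_sub hF1.integral_prod_right hF2.integral_prod_right]
    refine integral_congr_ae ?_
    filter_upwards [hF1.prod_left_ae, hF2.prod_left_ae,
      ae_restrict_mem measurableSet_Ioi] with v hv1 hv2 hv
    rw [← integral_sub hv1 hv2]
    exact setIntegral_congr_fun measurableSet_Ioi fun u hu => hTF u hu v hv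
  -- Step 4: swap order in the F1 term
  have hswap : (∫ v in Ioi (0:ℝ), ∫ u in Ioi (0:ℝ), F1 (u, v))
      = ∫ u in Ioi (0:ℝ), ∫ v in Ioi (0:ℝ), F1 (u, v) :=
    (integral_integral_swap (f := fun u v => F1 (u, v)) hF1).symm
  -- Step 5: evaluate the F1 term
  have hterm1 : (∫ u in Ioi (0:ℝ), ∫ v in Ioi (0:ℝ), F1 (u, v))
      = ∫ u in Ioi (0:ℝ), Real.log (1 + lam1 * u) * Real.exp (-u / (1 - ρ)) * u ^ k *
          ∫ v in (0:ℝ)..(lam1 * u / lam2), g v := by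
    refine setIntegral_congr_fun measurableSet_Ioi fun u hu => ?_
    have hu0 : (0:ℝ) < u := hu
    have hc : (0:ℝ) < lam1 * u / lam2 := div_pos (mul_pos hlam1 hu0) hlam2
    have hset : (fun v : ℝ => F1 (u, v))
        = (Iio (lam1 * u / lam2)).indicator (fun v => h1 u * g v) := by
      funext v
      by_cases h : v < lam1 * u / lam2
      · have hmem : ((u, v) : ℝ × ℝ) ∈ S := by
          have := (lt_div_iff₀ hlam2).mp h
          simp only [hSdef, Set.mem_setOf_eq]
          linarith
        rw [hF1def, Set.indicator_of_mem hmem,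
          Set.indicator_of_mem (show v ∈ Iio (lam1 * u / lam2) from h)]
      · have hmem : ((u, v) : ℝ × ℝ) ∉ S := by
          simp only [hSdef, Set.mem_setOf_eq]
          push_neg at h ⊢
          calc lam1 * u = lam1 * u / lam2 * lam2 := by field_simp
            _ ≤ v * lam2 := by nlinarith
            _ = lam2 * v := by ring
        rw [hF1def, Set.indicator_of_notMem hmem,
          Set.indicator_of_notMem (show v ∉ Iio (lam1 * u / lam2) from h)]
    rw [hset, MeasureTheory.setIntegral_indicator measurableSet_Iio, Set.Ioi_inter_Iio,
      ← MeasureTheory.integral_Ioc_eq_integral_Ioo,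
      ← intervalIntegral.integral_of_le hc.le, intervalIntegral.integral_const_mul]
    simp only [hh1def, hgdef]
    ring
  -- Step 6: evaluate the F2 term
  have hterm2 : (∫ v in Ioi (0:ℝ), ∫ u in Ioi (0:ℝ), F2 (u, v))
      = ∫ v in Ioi (0:ℝ), Real.log (1 + lam2 * v) * Real.exp (-v / (1 - ρ)) * v ^ k *
          ∫ u in Ioi (lam2 * v / lam1), g u := by
    refine setIntegral_congr_fun measurableSet_Ioi fun v hv => ?_
    have hv0 : (0:ℝ) < v := hv
    have hc : (0:ℝ) < lam2 * v / lam1 := div_pos (mul_pos hlam2 hv0) hlam1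
    have hset : (fun u : ℝ => F2 (u, v))
        = (Ioi (lam2 * v / lam1)).indicator (fun u => g u * h2 v) := by
      funext u
      by_cases h : lam2 * v / lam1 < u
      · have hmem : ((u, v) : ℝ × ℝ) ∈ S := by
          have := (div_lt_iff₀ hlam1).mp h
          simp only [hSdef, Set.mem_setOf_eq]
          linarith
        rw [hF2def, Set.indicator_of_mem hmem,
          Set.indicator_of_mem (show u ∈ Ioi (lam2 * v / lam1) from h)]
      · have hmem : ((u, v) : ℝ × ℝ) ∉ S := by
          simp only [hSdef, Set.mem_setOf_eq]
          push_neg at h ⊢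
          calc lam2 * v = lam2 * v / lam1 * lam1 := by field_simp
            _ ≥ u * lam1 := by nlinarith
            _ = lam1 * u := by ring
        rw [hF2def, Set.indicator_of_notMem hmem,
          Set.indicator_of_notMem (show u ∉ Ioi (lam2 * v / lam1) from h)]
    rw [hset, MeasureTheory.setIntegral_indicator measurableSet_Ioi, Set.Ioi_inter_Ioi,
      sup_eq_right.mpr hc.le, MeasureTheory.integral_mul_const]
    simp only [hh2def, hgdef]
    ring
  rw [step1, hsplit, hswap, hterm1, hterm2]
end
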